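/- arXiv:1904.09712 — 12 statements merged into one kernel-verified Lean document; each statement's English description precedes it below -/
import Mathlib

section
/- Let E be a real inner product space and let f, h : E → ℝ be twice continuously differentiable. Suppose f is L_f-relatively smooth with respect to h, i.e. |D²f(x)(v,v)| ≤ L_f·D²h(x)(v,v) for all x, v ∈ E. Then for all x, y ∈ E, |f(x) − f(y) − ⟪∇f(y), x − y⟫| ≤ L_f·D_h(x,y), where D_h(x,y) = h(x) − h(y) − ⟪∇h(y), x − y⟫ is the Bregman divergence of h. -/
open scoped RealInnerProductSpace

lemma bregman_nonneg_of_second_deriv_nonneg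
    {E : Type*} [NormedAddCommGroup E] [InnerProductSpace ℝ E]
    (F : E → ℝ) (gF : E → E)
    (hF : ContDiff ℝ 2 F)
    (hg : ∀ x v : E, fderiv ℝ F x v = ⟪gF x, v⟫)
    (hpos : ∀ x v : E, 0 ≤ iteratedFDeriv ℝ 2 F x ![v, v]) :
    ∀ x y : E, 0 ≤ F x - F y - ⟪gF y, x - y⟫ := by
  intro x y
  set v : E := x - y with hv
  set γ : ℝ → E := fun t => y + t • v with hγ
  have hγd : ∀ t : ℝ, HasDerivAt γ v t := by
    intro t
    simpa [hγ] using ((hasDerivAt_id t).smul_const v).const_add y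
  have hFd : Differentiable ℝ F := hF.differentiable (by norm_num)
  set φ1 : ℝ → ℝ := fun t => fderiv ℝ F (γ t) v with hφ1
  have hφd : ∀ t : ℝ, HasDerivAt (fun s => F (γ s)) (φ1 t) t := by
    intro t
    exact (hFd (γ t)).hasFDerivAt.comp_hasDerivAt t (hγd t)
  have hF' : ContDiff ℝ 1 (fderiv ℝ F) := hF.fderiv_right (by norm_num)
  have hφ1d : ∀ t : ℝ, HasDerivAt φ1 (fderiv ℝ (fderiv ℝ F) (γ t) v v) t := by
    intro t
    have h1 : HasDerivAt (fun s => fderiv ℝ F (γ s)) (fderiv ℝ (fderiv ℝ F) (γ t) v) t :=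
      ((hF'.differentiable one_ne_zero) (γ t)).hasFDerivAt.comp_hasDerivAt t (hγd t)
    exact ((ContinuousLinearMap.apply ℝ ℝ v).hasFDerivAt.comp_hasDerivAt t h1 :)
  have hnn : ∀ t : ℝ, 0 ≤ fderiv ℝ (fderiv ℝ F) (γ t) v v := by
    intro t
    have := hpos (γ t) v
    rwa [iteratedFDeriv_two_apply] at this
  have hmono : Monotone φ1 := by
    apply monotone_of_deriv_nonneg
    · exact fun t => (hφ1d t).differentiableAt
    · intro t
      rw [(hφ1d t).deriv]
      exact hnn t
  obtain ⟨c, hc, hceq⟩ := exists_hasDerivAt_eq_slope (fun s => F (γ s)) φ1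
    (by norm_num : (0:ℝ) < 1)
    (fun t _ => (hφd t).continuousAt.continuousWithinAt)
    (fun t _ => hφd t)
  have hγ0 : γ 0 = y := by simp [hγ]
  have hγ1 : γ 1 = x := by simp [hγ, hv]
  have h01 : φ1 0 ≤ φ1 c := hmono (le_of_lt hc.1)
  have hφ10 : φ1 0 = ⟪gF y, x - y⟫ := by rw [hφ1]; simp only [hγ0]; rw [hg]
  rw [hγ0, hγ1] at hceq
  have : φ1 c = F x - F y := by rw [hceq]; ring
  linarith [h01, hφ10 ▸ h01]

/-- **Generalized descent lemma under relative smoothness.**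
If `f` is `L_f`-relatively smooth with respect to `h`, i.e.
`|D²f(x)(v,v)| ≤ L_f · D²h(x)(v,v)` for all `x, v`, then for all `x, y`,
`|f(x) − f(y) − ⟪∇f(y), x − y⟫| ≤ L_f · D_h(x,y)`, where
`D_h(x,y) = h(x) − h(y) − ⟪∇h(y), x − y⟫` is the Bregman divergence of `h`. -/
theorem relative_smoothness_descent_lemma
    {E : Type*} [NormedAddCommGroup E] [InnerProductSpace ℝ E]
    (f h : E → ℝ) (gf gh : E → E) (Lf : ℝ)
    (hf : ContDiff ℝ 2 f) (hh : ContDiff ℝ 2 h)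
    (hgf : ∀ x v : E, fderiv ℝ f x v = ⟪gf x, v⟫)
    (hgh : ∀ x v : E, fderiv ℝ h x v = ⟪gh x, v⟫)
    (hrel : ∀ x v : E,
      |iteratedFDeriv ℝ 2 f x ![v, v]| ≤ Lf * iteratedFDeriv ℝ 2 h x ![v, v]) :
    ∀ x y : E,
      |f x - f y - ⟪gf y, x - y⟫| ≤ Lf * (h x - h y - ⟪gh y, x - y⟫) := by
  intro x y
  have hf2 : ContDiff ℝ (2:ℕ) f := by exact_mod_cast hf
  have hh2 : ContDiff ℝ (2:ℕ) h := by exact_mod_cast hh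
  have hfd : Differentiable ℝ f := hf.differentiable (by norm_num)
  have hhd : Differentiable ℝ h := hh.differentiable (by norm_num)
  -- second derivative of Lf•h ± f
  have keyD : ∀ (s : ℝ) (z w : E), iteratedFDeriv ℝ 2 (fun u => Lf * h u + s * f u) z ![w, w]
      = Lf * iteratedFDeriv ℝ 2 h z ![w, w] + s * iteratedFDeriv ℝ 2 f z ![w, w] := by
    intro s z w
    have : (fun u => Lf * h u + s * f u) = (Lf • h) + (s • f) := by
      funext u; simp [smul_eq_mul]
    rw [this, iteratedFDeriv_add_apply (f := Lf • h) (g := s • f) (hh2.const_smul Lf).contDiffAt (hf2.const_smul s).contDiffAt,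
      iteratedFDeriv_const_smul_apply hh2.contDiffAt, iteratedFDeriv_const_smul_apply hf2.contDiffAt]
    simp
  -- fderiv of Lf•h ± f
  have keyF : ∀ (s : ℝ) (z w : E), fderiv ℝ (fun u => Lf * h u + s * f u) z w
      = ⟪Lf • gh z + s • gf z, w⟫ := by
    intro s z w
    have hd1 : DifferentiableAt ℝ (fun u => Lf * h u) z := (hhd z).const_mul Lf
    have hd2 : DifferentiableAt ℝ (fun u => s * f u) z := (hfd z).const_mul s
    rw [fderiv_fun_add hd1 hd2]
    simp only [ContinuousLinearMap.add_apply, fderiv_const_mul (hhd z), fderiv_const_mul (hfd z),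
      ContinuousLinearMap.smul_apply, hgh, hgf, inner_add_left, real_inner_smul_left, smul_eq_mul]
  have main : ∀ s : ℝ, s = 1 ∨ s = -1 →
      0 ≤ (Lf * h x + s * f x) - (Lf * h y + s * f y) - ⟪Lf • gh y + s • gf y, x - y⟫ := by
    intro s hs
    refine bregman_nonneg_of_second_deriv_nonneg (fun u => Lf * h u + s * f u)
      (fun u => Lf • gh u + s • gf u) ?_ (keyF s) ?_ x y
    · exact (contDiff_const.mul hh).add (contDiff_const.mul hf)
    · intro z w
      rw [keyD s z w]
      have := hrel z w
      have habs := abs_le.1 this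
      rcases hs with hs | hs <;> subst hs <;> nlinarith [habs.1, habs.2]
  have h1 := main 1 (Or.inl rfl)
  have h2 := main (-1) (Or.inr rfl)
  simp only [one_mul, neg_one_mul, inner_add_left, real_inner_smul_left, one_smul, neg_smul,
    inner_neg_left, smul_eq_mul] at h1 h2
  rw [abs_le]
  constructor <;> [linarith [h2]; linarith [h1]]
end

section
/- Let E be a real inner product space and let f, h : E → ℝ be twice continuously differentiable. Suppose D²h(x)(v,v) ≥ σ·‖v‖² for all x, v (σ > 0), and f is L_f-relatively smooth with respect to h, i.e. |D²f(x)(v,v)| ≤ L_f·D²h(x)(v,v) for all x, v. Let 0 < η < 1/L_f, let x⁻ ∈ E, and let x₊ be a global minimizer over E of the function x ↦ ⟪∇f(x⁻), x − x⁻⟫ + (1/η)·D_h(x, x⁻). Then f(x⁻) − f(x₊) ≥ (1/η − L_f)·(σ/2)·‖x₊ − x⁻‖². (Sufficient decrease of one Bregman gradient descent step.) -/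
open scoped RealInnerProductSpace

section BregmanAux
variable {E : Type*} [NormedAddCommGroup E] [InnerProductSpace ℝ E]

private lemma line_hasDerivAt' (x v : E) (t : ℝ) :
    HasDerivAt (fun s : ℝ => x + s • v) v t := by
  simpa using ((hasDerivAt_id t).smul_const v).const_add x

/-- Convexity-type Taylor inequality from nonneg second directional derivative. -/
private lemma key_taylor (φ : E → ℝ) (hφ : ContDiff ℝ 2 φ)
    (hpos : ∀ x v : E, 0 ≤ fderiv ℝ (fderiv ℝ φ) x v v) (x y : E) :
    φ x + fderiv ℝ φ x (y - x) ≤ φ y := by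
  set v := y - x with hv
  set g : ℝ → ℝ := fun t => φ (x + t • v) with hgdef
  set g1 : ℝ → ℝ := fun t => fderiv ℝ φ (x + t • v) v with hg1def
  have hφd : Differentiable ℝ φ := hφ.differentiable (by norm_num)
  have hφ' : ContDiff ℝ 1 (fderiv ℝ φ) := hφ.fderiv_right (by norm_num)
  have hg : ∀ t : ℝ, HasDerivAt g (g1 t) t := fun t =>
    (hφd (x + t • v)).hasFDerivAt.comp_hasDerivAt t (line_hasDerivAt' x v t)
  have hg1 : ∀ t : ℝ, HasDerivAt g1 (fderiv ℝ (fderiv ℝ φ) (x + t • v) v v) t := by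
    intro t
    have h1 : HasDerivAt (fun s : ℝ => fderiv ℝ φ (x + s • v))
        (fderiv ℝ (fderiv ℝ φ) (x + t • v) v) t :=
      ((hφ'.differentiable (by norm_num)) (x + t • v)).hasFDerivAt.comp_hasDerivAt t
        (line_hasDerivAt' x v t)
    exact (ContinuousLinearMap.apply ℝ ℝ v).hasFDerivAt.comp_hasDerivAt t h1
  have hg1mono : Monotone g1 := by
    apply monotone_of_deriv_nonneg (fun t => (hg1 t).differentiableAt)
    intro t
    rw [(hg1 t).deriv]
    exact hpos _ _
  obtain ⟨c, hc, hceq⟩ := exists_hasDerivAt_eq_slope g g1 (by norm_num : (0:ℝ) < 1)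
    (fun t _ => (hg t).continuousAt.continuousWithinAt)
    (fun t _ => hg t)
  have h01 : g 1 - g 0 = g1 c := by rw [hceq]; ring
  have hmono := hg1mono (le_of_lt hc.1)
  have hg0 : g 0 = φ x := by simp [hgdef]
  have hgone : g 1 = φ y := by simp [hgdef, hv]
  have hg10 : g1 0 = fderiv ℝ φ x (y - x) := by simp [hg1def, hv]
  linarith [h01, hmono]

noncomputable def innerSL' (E : Type*) [NormedAddCommGroup E] [InnerProductSpace ℝ E] :
    E →L[ℝ] E →L[ℝ] ℝ := innerSL ℝ

@[simp] lemma innerSL'_apply (x y : E) : innerSL' E x y = ⟪x, y⟫ := rfl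

private lemma fderiv_combo (f h : E → ℝ) (hf : ContDiff ℝ 2 f) (hh : ContDiff ℝ 2 h)
    (a : ℝ) (z : E) :
    fderiv ℝ (fun z => a * h z - f z) z = a • fderiv ℝ h z - fderiv ℝ f z :=
  ((((hh.differentiable (by norm_num)) z).hasFDerivAt.const_mul a).sub
    ((hf.differentiable (by norm_num)) z).hasFDerivAt).fderiv

private lemma hessian_combo (f h : E → ℝ) (hf : ContDiff ℝ 2 f) (hh : ContDiff ℝ 2 h)
    (a : ℝ) (x v : E) :
    fderiv ℝ (fderiv ℝ (fun z => a * h z - f z)) x v v =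
      a * fderiv ℝ (fderiv ℝ h) x v v - fderiv ℝ (fderiv ℝ f) x v v := by
  have e1 : fderiv ℝ (fun z => a * h z - f z) = fun z => a • fderiv ℝ h z - fderiv ℝ f z :=
    funext (fderiv_combo f h hf hh a)
  have hf' : Differentiable ℝ (fderiv ℝ f) := (hf.fderiv_right (m := 1) (by norm_num)).differentiable (by norm_num)
  have hh' : Differentiable ℝ (fderiv ℝ h) := (hh.fderiv_right (m := 1) (by norm_num)).differentiable (by norm_num)
  have e2 : HasFDerivAt (fun z => a • fderiv ℝ h z - fderiv ℝ f z)
      (a • fderiv ℝ (fderiv ℝ h) x - fderiv ℝ (fderiv ℝ f) x) x :=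
    ((hh' x).hasFDerivAt.const_smul a).sub (hf' x).hasFDerivAt
  rw [e1, e2.fderiv]
  simp [ContinuousLinearMap.sub_apply, ContinuousLinearMap.smul_apply]

private lemma fderiv_normsq_combo (h : E → ℝ) (hh : ContDiff ℝ 2 h) (c : ℝ) (z : E) :
    fderiv ℝ (fun z => h z - c * ‖z‖^2) z = fderiv ℝ h z - (2*c) • (innerSL' E z) := by
  have h2 : HasFDerivAt (fun z : E => c * ‖z‖^2) ((2*c) • (innerSL' E z)) z := by
    have := ((hasFDerivAt_id z).norm_sq).const_mul c
    refine this.congr_fderiv ?_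
    ext w
    simp [two_smul, real_inner_smul_left, mul_comm, mul_add]
    ring
  exact (((hh.differentiable (by norm_num)) z).hasFDerivAt.sub h2).fderiv

private lemma hessian_normsq (h : E → ℝ) (hh : ContDiff ℝ 2 h) (c : ℝ) (x v : E) :
    fderiv ℝ (fderiv ℝ (fun z => h z - c * ‖z‖^2)) x v v =
      fderiv ℝ (fderiv ℝ h) x v v - 2 * c * ⟪v, v⟫ := by
  have e1 : fderiv ℝ (fun z => h z - c * ‖z‖^2)
      = fun z => fderiv ℝ h z - (2*c) • (innerSL' E z) :=
    funext (fderiv_normsq_combo h hh c)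
  have hh' : Differentiable ℝ (fderiv ℝ h) := (hh.fderiv_right (m := 1) (by norm_num)).differentiable (by norm_num)
  have e2 : HasFDerivAt (fun z => fderiv ℝ h z - (2*c) • (innerSL' E z))
      (fderiv ℝ (fderiv ℝ h) x - (2*c) • (innerSL' E)) x :=
    (hh' x).hasFDerivAt.sub (((innerSL' E).hasFDerivAt).const_smul (2*c))
  rw [e1, e2.fderiv]
  simp [ContinuousLinearMap.sub_apply, ContinuousLinearMap.smul_apply]

end BregmanAux

/-- **Sufficient decrease of one Bregman gradient descent step.**
If `h` is `σ`-strongly convex in the second-order sense (`D²h(x)(v,v) ≥ σ‖v‖²`),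
`f` is `L_f`-relatively smooth w.r.t. `h`, `0 < η < 1/L_f`, and `x₊` globally minimizes
`x ↦ ⟪∇f(x⁻), x − x⁻⟫ + (1/η) D_h(x, x⁻)`, then
`f(x⁻) − f(x₊) ≥ (1/η − L_f)(σ/2)‖x₊ − x⁻‖²`. -/
theorem bregman_gd_sufficient_decrease
    {E : Type*} [NormedAddCommGroup E] [InnerProductSpace ℝ E]
    (f h : E → ℝ) (gf gh : E → E) (σ Lf η : ℝ)
    (hf : ContDiff ℝ 2 f) (hh : ContDiff ℝ 2 h)
    (hgf : ∀ x v : E, fderiv ℝ f x v = ⟪gf x, v⟫)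
    (hgh : ∀ x v : E, fderiv ℝ h x v = ⟪gh x, v⟫)
    (hσ : 0 < σ)
    (hstrong : ∀ x v : E, iteratedFDeriv ℝ 2 h x ![v, v] ≥ σ * ‖v‖ ^ 2)
    (hrel : ∀ x v : E,
      |iteratedFDeriv ℝ 2 f x ![v, v]| ≤ Lf * iteratedFDeriv ℝ 2 h x ![v, v])
    (hη0 : 0 < η) (hη1 : η < 1 / Lf)
    (xm xp : E)
    (hmin : ∀ x : E,
      ⟪gf xm, xp - xm⟫ + (1 / η) * (h xp - h xm - ⟪gh xm, xp - xm⟫) ≤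
        ⟪gf xm, x - xm⟫ + (1 / η) * (h x - h xm - ⟪gh xm, x - xm⟫)) :
    f xm - f xp ≥ (1 / η - Lf) * (σ / 2) * ‖xp - xm‖ ^ 2 := by
  have hLf : 0 < Lf := by
    by_contra hneg
    push_neg at hneg
    have h1 : 1 / Lf ≤ 0 := one_div_nonpos.mpr hneg
    linarith
  have hLfη : Lf < 1 / η := by
    rw [lt_div_iff₀ hη0]
    have : η * Lf < 1 := (lt_div_iff₀ hLf).mp hη1
    linarith [mul_comm η Lf, this]
  -- convert second-derivative hypotheses
  have hstrong' : ∀ x v : E, σ * ‖v‖ ^ 2 ≤ fderiv ℝ (fderiv ℝ h) x v v := by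
    intro x v
    have := hstrong x v
    rwa [iteratedFDeriv_two_apply, show (![v, v] : Fin 2 → E) 0 = v from rfl,
      show (![v, v] : Fin 2 → E) 1 = v from rfl] at this
  have hrel' : ∀ x v : E,
      |fderiv ℝ (fderiv ℝ f) x v v| ≤ Lf * fderiv ℝ (fderiv ℝ h) x v v := by
    intro x v
    have := hrel x v
    rwa [iteratedFDeriv_two_apply, iteratedFDeriv_two_apply,
      show (![v, v] : Fin 2 → E) 0 = v from rfl,
      show (![v, v] : Fin 2 → E) 1 = v from rfl] at this
  set Δ : E := xp - xm with hΔ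
  -- Bregman divergence of h
  set Dh : ℝ := h xp - h xm - ⟪gh xm, Δ⟫ with hDh
  -- Step 1: minimality at x = xm
  have step1 : ⟪gf xm, Δ⟫ + (1 / η) * Dh ≤ 0 := by
    have := hmin xm
    simpa [hΔ, hDh] using this
  -- Step 2: Dh ≥ (σ/2) ‖Δ‖²
  have step2 : (σ / 2) * ‖Δ‖ ^ 2 ≤ Dh := by
    have hψ : ContDiff ℝ 2 (fun z : E => h z - (σ/2) * ‖z‖ ^ 2) :=
      hh.sub (contDiff_const.mul (contDiff_norm_sq ℝ))
    have hpos : ∀ x v : E, 0 ≤ fderiv ℝ (fderiv ℝ (fun z : E => h z - (σ/2) * ‖z‖ ^ 2)) x v v := by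
      intro x v
      rw [hessian_normsq h hh (σ/2) x v]
      have h1 := hstrong' x v
      have h2 : ⟪v, v⟫ = ‖v‖ ^ 2 := real_inner_self_eq_norm_sq v
      rw [h2]; linarith
    have k2 := key_taylor (fun z : E => h z - (σ/2) * ‖z‖ ^ 2) hψ hpos xm xp
    rw [fderiv_normsq_combo h hh (σ/2) xm] at k2
    simp only [ContinuousLinearMap.sub_apply, ContinuousLinearMap.smul_apply,
      innerSL'_apply, smul_eq_mul, hgh] at k2
    have eΔ : ‖xp - xm‖ ^ 2 = ‖xp‖ ^ 2 - 2 * ⟪xp, xm⟫ + ‖xm‖ ^ 2 := norm_sub_sq_real xp xm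
    have e2 : ⟪xm, xp - xm⟫ = ⟪xm, xp⟫ - ‖xm‖ ^ 2 := by
      rw [inner_sub_right, real_inner_self_eq_norm_sq]
    have e3 : ⟪xp, xm⟫ = ⟪xm, xp⟫ := real_inner_comm xm xp
    rw [hDh, hΔ]
    nlinarith [k2]
  -- Step 3: relative smoothness Bregman bound
  have step3 : f xp ≤ f xm + ⟪gf xm, Δ⟫ + Lf * Dh := by
    have hψ : ContDiff ℝ 2 (fun z : E => Lf * h z - f z) := (contDiff_const.mul hh).sub hf
    have hpos : ∀ x v : E, 0 ≤ fderiv ℝ (fderiv ℝ (fun z : E => Lf * h z - f z)) x v v := by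
      intro x v
      rw [hessian_combo f h hf hh Lf x v]
      have := (abs_le.mp (hrel' x v)).2
      linarith
    have k1 := key_taylor (fun z : E => Lf * h z - f z) hψ hpos xm xp
    rw [fderiv_combo f h hf hh Lf xm] at k1
    simp only [ContinuousLinearMap.sub_apply, ContinuousLinearMap.smul_apply,
      smul_eq_mul, hgf, hgh] at k1
    rw [hDh, hΔ]
    linarith [k1]
  -- conclude
  have hpos' : 0 < 1 / η - Lf := by linarith
  have hkey : f xm - f xp ≥ (1 / η - Lf) * Dh := by
    have h1 : -⟪gf xm, Δ⟫ ≥ (1 / η) * Dh := by linarith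
    have h2 : (1 / η - Lf) * Dh = (1 / η) * Dh - Lf * Dh := by ring
    nlinarith [step3, h1, h2, step1, mul_pos hη0 (sub_pos.mpr hη1)]
  have hfinal : (1 / η - Lf) * ((σ / 2) * ‖Δ‖ ^ 2) ≤ (1 / η - Lf) * Dh :=
    mul_le_mul_of_nonneg_left step2 (le_of_lt hpos')
  calc (1 / η - Lf) * (σ / 2) * ‖xp - xm‖ ^ 2
      = (1 / η - Lf) * ((σ / 2) * ‖Δ‖ ^ 2) := by rw [hΔ]; ring
    _ ≤ (1 / η - Lf) * Dh := hfinal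
    _ ≤ f xm - f xp := hkey
end

section
/- Let E be a real inner product space, let f : E → ℝ be any function, and let h : E → ℝ be twice continuously differentiable with D²h(x)(v,v) ≥ σ·‖v‖² for all x, v (σ > 0). Let η > 0, let x⁻ ∈ E, and let x₊ be a global minimizer over E of the function x ↦ f(x) + (1/η)·D_h(x, x⁻). Then f(x⁻) − f(x₊) ≥ (σ/(2η))·‖x₊ − x⁻‖². (Sufficient decrease of one Bregman proximal point step.) -/
open scoped RealInnerProductSpace

/-- **Sufficient decrease of one Bregman proximal point step.**
If `h` is twice continuously differentiable with `D²h(x)(v,v) ≥ σ‖v‖²` (`σ > 0`),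
`η > 0`, and `x₊` globally minimizes `x ↦ f(x) + (1/η) D_h(x, x⁻)`, then
`f(x⁻) − f(x₊) ≥ (σ/(2η))‖x₊ − x⁻‖²`. -/
theorem bregman_ppm_sufficient_decrease
    {E : Type*} [NormedAddCommGroup E] [InnerProductSpace ℝ E]
    (f h : E → ℝ) (gh : E → E) (σ η : ℝ)
    (hh : ContDiff ℝ 2 h)
    (hgh : ∀ x v : E, fderiv ℝ h x v = ⟪gh x, v⟫)
    (hσ : 0 < σ)
    (hstrong : ∀ x v : E, iteratedFDeriv ℝ 2 h x ![v, v] ≥ σ * ‖v‖ ^ 2)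
    (hη : 0 < η)
    (xm xp : E)
    (hmin : ∀ x : E,
      f xp + (1 / η) * (h xp - h xm - ⟪gh xm, xp - xm⟫) ≤
        f x + (1 / η) * (h x - h xm - ⟪gh xm, x - xm⟫)) :
    f xm - f xp ≥ (σ / (2 * η)) * ‖xp - xm‖ ^ 2 := by
  set v := xp - xm with hv
  -- line map and its derivative
  have hline : ∀ t : ℝ, HasDerivAt (fun t : ℝ => xm + t • v) v t := by
    intro t
    simpa using ((hasDerivAt_id t).smul_const v).const_add xm
  have hdiff : Differentiable ℝ h := hh.differentiable (by norm_num)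
  have hdiff2 : Differentiable ℝ (fderiv ℝ h) :=
    (hh.fderiv_right (m := 1) (by norm_num)).differentiable (by norm_num)
  -- first derivative of φ t = h (xm + t • v)
  have hφ' : ∀ t : ℝ, HasDerivAt (fun t : ℝ => h (xm + t • v))
      (fderiv ℝ h (xm + t • v) v) t := by
    intro t
    exact ((hdiff (xm + t • v)).hasFDerivAt).comp_hasDerivAt t (hline t)
  -- second derivative
  have hφ'' : ∀ t : ℝ, HasDerivAt (fun t : ℝ => fderiv ℝ h (xm + t • v) v)
      (fderiv ℝ (fderiv ℝ h) (xm + t • v) v v) t := by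
    intro t
    have h1 : HasDerivAt (fun t : ℝ => fderiv ℝ h (xm + t • v))
        (fderiv ℝ (fderiv ℝ h) (xm + t • v) v) t :=
      ((hdiff2 (xm + t • v)).hasFDerivAt).comp_hasDerivAt t (hline t)
    simpa using h1.clm_apply (hasDerivAt_const t v)
  have hsecond : ∀ t : ℝ, fderiv ℝ (fderiv ℝ h) (xm + t • v) v v ≥ σ * ‖v‖ ^ 2 := by
    intro t
    have := hstrong (xm + t • v) v
    rwa [iteratedFDeriv_two_apply] at this
  -- χ t = φ t - φ'(0) * t - (σ‖v‖²/2) t²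
  set c : ℝ := σ * ‖v‖ ^ 2 with hc
  set χ : ℝ → ℝ := fun t => h (xm + t • v) - fderiv ℝ h xm v * t - c / 2 * t ^ 2 with hχ
  set χ' : ℝ → ℝ := fun t => fderiv ℝ h (xm + t • v) v - fderiv ℝ h xm v - c * t with hχ'
  have hdχ : ∀ t : ℝ, HasDerivAt χ (χ' t) t := by
    intro t
    have h1 := (hφ' t).sub (((hasDerivAt_id t).const_mul (fderiv ℝ h xm v)))
    have h2 : HasDerivAt (fun t : ℝ => c / 2 * t ^ 2) (c * t) t := by
      have := (hasDerivAt_pow 2 t).const_mul (c / 2)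
      exact this.congr_deriv (by norm_num; ring)
    exact (h1.sub h2).congr_deriv (by simp [χ'])
  have hdχ' : ∀ t : ℝ, HasDerivAt χ' (fderiv ℝ (fderiv ℝ h) (xm + t • v) v v - c) t := by
    intro t
    have h1 := ((hφ'' t).sub_const (fderiv ℝ h xm v)).sub ((hasDerivAt_id t).const_mul c)
    exact h1.congr_deriv (by simp)
  -- χ' is monotone, χ'(0) = 0, so χ' ≥ 0 on [0,∞)
  have hχ'mono : Monotone χ' := by
    apply monotone_of_deriv_nonneg
    · exact fun t => (hdχ' t).differentiableAt
    · intro t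
      rw [(hdχ' t).deriv]
      have := hsecond t
      linarith
  have hχ'0 : χ' 0 = 0 := by simp [χ']
  have hχmono : MonotoneOn χ (Set.Icc (0 : ℝ) 1) := by
    apply monotoneOn_of_deriv_nonneg (convex_Icc 0 1)
    · exact fun t _ => ((hdχ t).differentiableAt).continuousAt.continuousWithinAt
    · exact fun t _ => ((hdχ t).differentiableAt).differentiableWithinAt
    · intro t ht
      rw [(hdχ t).deriv]
      rw [interior_Icc] at ht
      have := hχ'mono (le_of_lt ht.1)
      rw [hχ'0] at this
      linarith
  have hkey : χ 0 ≤ χ 1 :=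
    hχmono (Set.mem_Icc.mpr ⟨le_refl 0, zero_le_one⟩) (Set.mem_Icc.mpr ⟨zero_le_one, le_refl 1⟩)
      zero_le_one
  have hsimp0 : (xm + (0:ℝ) • v) = xm := by simp
  have hsimp1 : (xm + (1:ℝ) • v) = xp := by simp [hv]
  have hbreg : h xp - h xm - ⟪gh xm, v⟫ ≥ c / 2 := by
    have e0 : χ 0 = h xm := by simp [χ, hsimp0]
    have hxmv : xm + v = xp := by simp [hv]
    have e1 : χ 1 = h xp - fderiv ℝ h xm v - c / 2 := by simp [χ, hxmv]
    have := hgh xm v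
    rw [e0, e1] at hkey
    linarith
  have hmin' := hmin xm
  simp only [sub_self, inner_zero_right] at hmin'
  have hc_nonneg : 0 ≤ c := by positivity
  have h1η : 0 < 1 / η := by positivity
  have : (1 / η) * (h xp - h xm - ⟪gh xm, v⟫) ≥ (1 / η) * (c / 2) :=
    mul_le_mul_of_nonneg_left hbreg (le_of_lt h1η)
  have hfinal : f xm - f xp ≥ (1 / η) * (c / 2) := by linarith
  have heq : (1 / η) * (c / 2) = (σ / (2 * η)) * ‖xp - xm‖ ^ 2 := by
    rw [hc, hv]; ring
  linarith
end

section
/- Let E be a finite-dimensional real inner product space, let f : E → ℝ be twice continuously differentiable and bounded below, and let h : E → ℝ be twice continuously differentiable with D²h(x)(v,v) ≥ σ·‖v‖² for all x, v (σ > 0). Suppose f is L_f-relatively smooth with respect to h, i.e. |D²f(x)(v,v)| ≤ L_f·D²h(x)(v,v) for all x, v, and let 0 < η < 1/L_f. Then for every x⁻ ∈ E, the function x ↦ f(x) + (1/η)·D_h(x, x⁻) attains a global minimum at exactly one point of E. (Well-definedness of the Bregman proximal point step.) -/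
open scoped RealInnerProductSpace

/-- Quadratic lower bound for a `C²` function whose second derivative along every
direction is at least `μ‖v‖²`. -/
theorem quad_lower_bound {E : Type*} [NormedAddCommGroup E] [InnerProductSpace ℝ E]
    {φ : E → ℝ} (hφ : ContDiff ℝ 2 φ) {μ : ℝ}
    (hμ : ∀ x v : E, μ * ‖v‖ ^ 2 ≤ iteratedFDeriv ℝ 2 φ x ![v, v]) (x y : E) :
    φ x + fderiv ℝ φ x (y - x) + μ / 2 * ‖y - x‖ ^ 2 ≤ φ y := by
  set v := y - x with hv
  have hφ1 : ContDiff ℝ 1 (fderiv ℝ φ) := hφ.fderiv_right (le_refl 2)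
  have hd1 : Differentiable ℝ φ := hφ.differentiable two_ne_zero
  have hd2 : Differentiable ℝ (fderiv ℝ φ) := hφ1.differentiable one_ne_zero
  set L : ℝ → E := fun t => x + t • v with hL
  have hLd : ∀ t : ℝ, HasDerivAt L v t := by
    intro t
    simpa [hL] using ((hasDerivAt_id t).smul_const v).const_add x
  set ev : (E →L[ℝ] ℝ) →L[ℝ] ℝ := ContinuousLinearMap.apply ℝ ℝ v with hev
  set g : ℝ → ℝ := fun t => φ (L t) with hg
  set g' : ℝ → ℝ := fun t => fderiv ℝ φ (L t) v with hg'
  have hgd : ∀ t : ℝ, HasDerivAt g (g' t) t := fun t =>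
    ((hd1 (L t)).hasFDerivAt).comp_hasDerivAt t (hLd t)
  have hg'd : ∀ t : ℝ, HasDerivAt g' (iteratedFDeriv ℝ 2 φ (L t) ![v, v]) t := by
    intro t
    have h1 : HasFDerivAt (fun z : E => fderiv ℝ φ z v)
        (ev.comp (fderiv ℝ (fderiv ℝ φ) (L t))) (L t) :=
      ev.hasFDerivAt.comp (L t) (hd2 (L t)).hasFDerivAt
    have h2 := h1.comp_hasDerivAt t (hLd t)
    have : iteratedFDeriv ℝ 2 φ (L t) ![v, v]
        = (ev.comp (fderiv ℝ (fderiv ℝ φ) (L t))) v := by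
      rw [iteratedFDeriv_two_apply]
      simp [hev]
    rw [this]
    exact h2
  -- the auxiliary function with subtracted parabola is convex
  set c : ℝ := μ / 2 * ‖v‖ ^ 2 with hc
  set q : ℝ → ℝ := fun t => g t - c * t ^ 2 with hq
  have hqd : ∀ t : ℝ, HasDerivAt q (g' t - c * (2 * t)) t := by
    intro t
    exact (hgd t).sub (((hasDerivAt_pow 2 t).const_mul c).congr_deriv (by ring))
  have hqderiv : deriv q = fun t => g' t - c * (2 * t) := by
    funext t; exact (hqd t).deriv
  have hq'd : ∀ t : ℝ, HasDerivAt (fun t => g' t - c * (2 * t))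
      (iteratedFDeriv ℝ 2 φ (L t) ![v, v] - c * 2) t := by
    intro t
    have h2 : HasDerivAt (fun s : ℝ => c * (2 * s)) (c * 2) t := by
      have := (hasDerivAt_id t).const_mul (c * 2)
      simp only [mul_one] at this
      simpa [mul_assoc] using this
    exact (hg'd t).sub h2
  have hconv : ConvexOn ℝ Set.univ q := by
    apply convexOn_univ_of_deriv2_nonneg
    · exact fun t => (hqd t).differentiableAt
    · intro t
      rw [hqderiv]
      exact (hq'd t).differentiableAt
    · intro t
      have : deriv^[2] q t = deriv (deriv q) t := rfl
      rw [this, hqderiv]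
      rw [(hq'd t).deriv]
      have := hμ (L t) v
      simp only [hc]
      nlinarith [this]
  have hslope : deriv q 0 ≤ slope q 0 1 :=
    hconv.deriv_le_slope (Set.mem_univ 0) (Set.mem_univ 1) one_pos
      (hqd 0).differentiableAt
  rw [hqderiv] at hslope
  have e0 : L 0 = x := by simp [hL]
  have e1 : L 1 = y := by simp [hL, hv]
  have h1 : q 1 = φ y - c := by simp [hq, hg, e1]
  have h0 : q 0 = φ x := by simp [hq, hg, e0]
  have hs : slope q 0 1 = φ y - c - φ x := by
    rw [slope_def_field, h1, h0]; ring
  have hL0 : g' 0 = fderiv ℝ φ x v := by simp only [hg']; rw [e0]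
  rw [hs] at hslope
  simp only [hL0, mul_zero, sub_zero] at hslope
  simp only [hc] at hslope
  linarith

/-- **Well-definedness of the Bregman proximal point step.**
On a finite-dimensional real inner product space, if `f` is `C²` and bounded below,
`h` is `C²` with `D²h(x)(v,v) ≥ σ‖v‖²` (`σ > 0`), `f` is `L_f`-relatively smooth w.r.t.
`h`, and `0 < η < 1/L_f`, then for every `x⁻` the function
`x ↦ f(x) + (1/η) D_h(x, x⁻)` attains its global minimum at exactly one point. -/
theorem bregman_ppm_step_well_defined
    {E : Type*} [NormedAddCommGroup E] [InnerProductSpace ℝ E] [FiniteDimensional ℝ E]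
    (f h : E → ℝ) (gh : E → E) (σ Lf η : ℝ)
    (hf : ContDiff ℝ 2 f) (hh : ContDiff ℝ 2 h)
    (hbdd : BddBelow (Set.range f))
    (hgh : ∀ x v : E, fderiv ℝ h x v = ⟪gh x, v⟫)
    (hσ : 0 < σ)
    (hstrong : ∀ x v : E, iteratedFDeriv ℝ 2 h x ![v, v] ≥ σ * ‖v‖ ^ 2)
    (hrel : ∀ x v : E,
      |iteratedFDeriv ℝ 2 f x ![v, v]| ≤ Lf * iteratedFDeriv ℝ 2 h x ![v, v])
    (hη0 : 0 < η) (hη1 : η < 1 / Lf)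
    (xm : E) :
    ∃! x₀ : E, ∀ x : E,
      f x₀ + (1 / η) * (h x₀ - h xm - ⟪gh xm, x₀ - xm⟫) ≤
        f x + (1 / η) * (h x - h xm - ⟪gh xm, x - xm⟫) := by
  classical
  -- `Lf` must be positive
  have hLf : 0 < Lf := by
    by_contra hc
    push_neg at hc
    have : 1 / Lf ≤ 0 := by
      rcases eq_or_lt_of_le hc with rfl | hlt
      · simp
      · exact le_of_lt (div_neg_of_pos_of_neg one_pos hlt)
    linarith
  have hLfη : Lf < 1 / η := by
    rw [lt_div_iff₀ hLf] at hη1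
    rw [lt_div_iff₀ hη0]
    linarith
  set μ : ℝ := (1 / η - Lf) * σ with hμdef
  have hμpos : 0 < μ := mul_pos (by linarith) hσ
  set φ : E → ℝ := fun x => f x + (1 / η) * (h x - h xm - ⟪gh xm, x - xm⟫) with hφdef
  -- regularity
  have hinnerC : ContDiff ℝ 2 fun x : E => (⟪gh xm, x - xm⟫ : ℝ) :=
    (contDiff_const (c := gh xm)).inner ℝ (contDiff_id.sub contDiff_const)
  have hφC : ContDiff ℝ 2 φ :=
    hf.add ((contDiff_const (c := (1:ℝ) / η)).mul ((hh.sub contDiff_const).sub hinnerC))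
  -- first derivative of φ
  have hfd : ∀ y : E, HasFDerivAt φ
      (fderiv ℝ f y + (1 / η) • (fderiv ℝ h y - innerSL ℝ (gh xm))) y := by
    intro y
    have hinner : HasFDerivAt (fun x : E => (⟪gh xm, x - xm⟫ : ℝ))
        (innerSL ℝ (gh xm)) y := by
      have := (innerSL ℝ (gh xm)).hasFDerivAt.comp y
        ((hasFDerivAt_id y).sub_const xm)
      exact this
    have h2 : HasFDerivAt (fun x : E => h x - h xm - ⟪gh xm, x - xm⟫)
        (fderiv ℝ h y - innerSL ℝ (gh xm)) y :=
      (((hh.differentiable two_ne_zero) y).hasFDerivAt.sub_const (h xm)).sub hinner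
    exact ((hf.differentiable two_ne_zero) y).hasFDerivAt.add
      (HasFDerivAt.const_mul h2 (1 / η))
  have hφfd : fderiv ℝ φ = fun y =>
      fderiv ℝ f y + (1 / η) • (fderiv ℝ h y - innerSL ℝ (gh xm)) :=
    funext fun y => (hfd y).fderiv
  -- second derivative of φ
  have hsecond : ∀ x v : E, iteratedFDeriv ℝ 2 φ x ![v, v] =
      iteratedFDeriv ℝ 2 f x ![v, v] + (1 / η) * iteratedFDeriv ℝ 2 h x ![v, v] := by
    intro x v
    have hdf : DifferentiableAt ℝ (fderiv ℝ f) x :=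
      ((show ContDiff ℝ 1 (fderiv ℝ f) from hf.fderiv_right (le_refl 2)).differentiable one_ne_zero) x
    have hdh : DifferentiableAt ℝ (fderiv ℝ h) x :=
      ((show ContDiff ℝ 1 (fderiv ℝ h) from hh.fderiv_right (le_refl 2)).differentiable one_ne_zero) x
    have key : fderiv ℝ (fderiv ℝ φ) x =
        fderiv ℝ (fderiv ℝ f) x + (1 / η) • fderiv ℝ (fderiv ℝ h) x := by
      rw [hφfd]
      rw [fderiv_fun_add hdf (((hdh.sub_const _).fun_const_smul _))]
      congr 1
      rw [fderiv_fun_const_smul (hdh.sub_const _)]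
      congr 1
      exact fderiv_sub_const _
    rw [iteratedFDeriv_two_apply, iteratedFDeriv_two_apply, iteratedFDeriv_two_apply, key]
    simp
  -- quadratic lower bound hypothesis for φ
  have hμbound : ∀ x v : E, μ * ‖v‖ ^ 2 ≤ iteratedFDeriv ℝ 2 φ x ![v, v] := by
    intro x v
    rw [hsecond x v]
    have h1 := hstrong x v
    have h2 := hrel x v
    have h3 := neg_abs_le (iteratedFDeriv ℝ 2 f x ![v, v])
    have h4 : (0:ℝ) ≤ σ * ‖v‖ ^ 2 := by positivity
    nlinarith
  -- existence of a global minimizer via coercivity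
  have hquad := quad_lower_bound hφC hμbound
  set C : ℝ := ‖fderiv ℝ φ 0‖ with hC
  have hlow : ∀ y : E, φ 0 - C * ‖y‖ + μ / 2 * ‖y‖ ^ 2 ≤ φ y := by
    intro y
    have := hquad 0 y
    simp only [sub_zero] at this
    have h1 := (fderiv ℝ φ 0).le_opNorm y
    rw [Real.norm_eq_abs] at h1
    have h2 := neg_abs_le ((fderiv ℝ φ 0) y)
    have hCeq : ‖fderiv ℝ φ 0‖ = C := rfl
    rw [hCeq] at h1
    linarith
  have hcoer : Filter.Tendsto φ (Filter.cocompact E) Filter.atTop := by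
    have hnorm : Filter.Tendsto (fun y : E => ‖y‖) (Filter.cocompact E) Filter.atTop :=
      tendsto_norm_cocompact_atTop
    have hpoly : Filter.Tendsto (fun r : ℝ => φ 0 - C * r + μ / 2 * r ^ 2)
        Filter.atTop Filter.atTop := by
      have h1 : Filter.Tendsto (fun r : ℝ => μ / 2 * r - C) Filter.atTop Filter.atTop := by
        apply Filter.tendsto_atTop_add_const_right
        exact Filter.Tendsto.const_mul_atTop (by positivity) Filter.tendsto_id
      have h2 : Filter.Tendsto (fun r : ℝ => r * (μ / 2 * r - C)) Filter.atTop Filter.atTop :=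
        Filter.Tendsto.atTop_mul_atTop₀ Filter.tendsto_id h1
      have h3 := Filter.tendsto_atTop_add_const_left Filter.atTop (φ 0) h2
      refine h3.congr' ?_
      filter_upwards with r
      ring
    exact Filter.tendsto_atTop_mono (fun y => hlow y) (hpoly.comp hnorm)
  obtain ⟨x₀, hx₀⟩ := hφC.continuous.exists_forall_le hcoer
  refine ⟨x₀, hx₀, ?_⟩
  intro y hy
  -- uniqueness
  have hmin : IsLocalMin φ x₀ := Filter.Eventually.of_forall fun x => hx₀ x
  have hgrad : fderiv ℝ φ x₀ = 0 := hmin.fderiv_eq_zero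
  have := hquad x₀ y
  rw [hgrad] at this
  simp only [ContinuousLinearMap.zero_apply, add_zero] at this
  have hle : φ y ≤ φ x₀ := hy x₀
  have hz : y - x₀ = 0 := by
    by_contra hne
    have hnp : 0 < ‖y - x₀‖ := norm_pos_iff.mpr hne
    have hpos : 0 < ‖y - x₀‖ ^ 2 := by positivity
    have hp2 : 0 < μ / 2 * ‖y - x₀‖ ^ 2 := mul_pos (half_pos hμpos) hpos
    clear_value μ φ C
    linarith [this, hle, hp2]
  exact sub_eq_zero.mp hz
end

section
/- Let E and F be real inner product spaces, let f : E × F → ℝ be any function, and let h : E × F → ℝ be such that for every y ∈ F the function x ↦ h(x,y) is twice continuously differentiable with second-derivative bilinear form bounded below by σ‖v‖² (σ > 0), and for every x ∈ E the function y ↦ h(x,y) is twice continuously differentiable with second-derivative bilinear form bounded below by σ‖w‖². Let η > 0, (x⁻, y⁻) ∈ E × F, let x₊ be a global minimizer over E of x ↦ f(x, y⁻) + (1/η)·D_{h(·,y⁻)}(x, x⁻), and let y₊ be a global minimizer over F of y ↦ f(x₊, y) + (1/η)·D_{h(x₊,·)}(y, y⁻). Then f(x⁻, y⁻) − f(x₊,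 y₊) ≥ (σ/(2η))·(‖x₊ − x⁻‖² + ‖y₊ − y⁻‖²). (Sufficient decrease of one Bregman proximal alternating minimization step.) -/
open scoped RealInnerProductSpace

lemma bregman_strong_aux {E : Type*} [NormedAddCommGroup E] [InnerProductSpace ℝ E]
    (g : E → ℝ) (G : E → E) (σ : ℝ)
    (hg : ContDiff ℝ 2 g)
    (hG : ∀ x v, fderiv ℝ g x v = ⟪G x, v⟫)
    (hs : ∀ x v, iteratedFDeriv ℝ 2 g x ![v, v] ≥ σ * ‖v‖ ^ 2)
    (u v : E) :
    g u - g v - ⟪G v, u - v⟫ ≥ σ / 2 * ‖u - v‖ ^ 2 := by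
  set d := u - v with hd
  set c := σ * ‖d‖ ^ 2 with hc
  have hgdiff : Differentiable ℝ g := hg.differentiable (by norm_num)
  have hg'diff : Differentiable ℝ (fderiv ℝ g) :=
    (hg.fderiv_right (m := 1) (by norm_num)).differentiable (by norm_num)
  have hline : ∀ t : ℝ, HasDerivAt (fun t : ℝ => v + t • d) d t := by
    intro t
    simpa using ((hasDerivAt_id t).smul_const d).const_add v
  -- φ and its derivative
  have hφ : ∀ t : ℝ, HasDerivAt (fun t : ℝ => g (v + t • d))
      (fderiv ℝ g (v + t • d) d) t := by
    intro t
    exact ((hgdiff (v + t • d)).hasFDerivAt).comp_hasDerivAt t (hline t)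
  -- χ and its derivative
  have hχ : ∀ t : ℝ, HasDerivAt (fun t : ℝ => fderiv ℝ g (v + t • d) d)
      (fderiv ℝ (fderiv ℝ g) (v + t • d) d d) t := by
    intro t
    have h1 : HasDerivAt (fun t : ℝ => fderiv ℝ g (v + t • d))
        (fderiv ℝ (fderiv ℝ g) (v + t • d) d) t :=
      ((hg'diff (v + t • d)).hasFDerivAt).comp_hasDerivAt t (hline t)
    simpa using h1.clm_apply (hasDerivAt_const t d)
  have hχlb : ∀ t : ℝ, c ≤ fderiv ℝ (fderiv ℝ g) (v + t • d) d d := by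
    intro t
    have := hs (v + t • d) d
    rwa [iteratedFDeriv_two_apply] at this
  -- step 1 : χ t ≥ χ 0 + c t for t ≥ 0
  have step1 : ∀ t : ℝ, 0 ≤ t →
      fderiv ℝ g v d + c * t ≤ fderiv ℝ g (v + t • d) d := by
    intro t ht
    have hmono : Monotone (fun t : ℝ => fderiv ℝ g (v + t • d) d - c * t) := by
      have hdiff : ∀ s : ℝ, HasDerivAt (fun t : ℝ => fderiv ℝ g (v + t • d) d - c * t)
          (fderiv ℝ (fderiv ℝ g) (v + s • d) d d - c) s := by
        intro s
        exact (hχ s).sub ((hasDerivAt_id s).const_mul c |>.congr_deriv (by ring))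
      refine monotone_of_deriv_nonneg (fun s => (hdiff s).differentiableAt) ?_
      intro s
      rw [(hdiff s).deriv]
      linarith [hχlb s]
    have := hmono ht
    simp only [zero_smul, add_zero, mul_zero, sub_zero] at this
    linarith
  -- step 2 : monotone on Ici 0
  have hψ2 : ∀ t : ℝ, HasDerivAt
      (fun t : ℝ => g (v + t • d) - fderiv ℝ g v d * t - c * t ^ 2 / 2)
      (fderiv ℝ g (v + t • d) d - (fderiv ℝ g v d + c * t)) t := by
    intro t
    have h1 := (hφ t).sub ((hasDerivAt_id t).const_mul (fderiv ℝ g v d))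
    have h2 : HasDerivAt (fun t : ℝ => c * t ^ 2 / 2) (c * t) t := by
      have := ((hasDerivAt_pow 2 t).const_mul c).div_const 2
      simpa using this.congr_deriv (by ring)
    have := h1.sub h2
    exact this.congr_deriv (by ring)
  have hmono2 : MonotoneOn
      (fun t : ℝ => g (v + t • d) - fderiv ℝ g v d * t - c * t ^ 2 / 2) (Set.Ici (0:ℝ)) := by
    refine monotoneOn_of_deriv_nonneg (convex_Ici 0)
      (Continuous.continuousOn (continuous_iff_continuousAt.mpr
        fun t => (hψ2 t).differentiableAt.continuousAt)) ?_ ?_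
    · intro t _
      exact (hψ2 t).differentiableAt.differentiableWithinAt
    · intro t ht
      rw [interior_Ici] at ht
      rw [(hψ2 t).deriv]
      linarith [step1 t (le_of_lt ht)]
  have key := hmono2 (Set.self_mem_Ici) (Set.mem_Ici.mpr zero_le_one) zero_le_one
  simp only [zero_smul, add_zero, mul_zero, mul_one, one_pow, sub_zero, zero_pow] at key
  have h10 : v + (1:ℝ) • d = u := by rw [hd]; simp
  rw [h10] at key
  have hGv : fderiv ℝ g v d = ⟪G v, d⟫ := hG v d
  rw [hGv] at key
  norm_num at key
  linarith [key]


/-- **Sufficient decrease of one Bregman proximal alternating minimization (B-PAM) step.**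
`h(·,y)` and `h(x,·)` are `C²` with second derivatives bounded below by `σ‖·‖²`;
`x₊` globally minimizes `x ↦ f(x,y⁻) + (1/η) D_{h(·,y⁻)}(x,x⁻)` and
`y₊` globally minimizes `y ↦ f(x₊,y) + (1/η) D_{h(x₊,·)}(y,y⁻)`. Then
`f(x⁻,y⁻) − f(x₊,y₊) ≥ (σ/(2η))(‖x₊−x⁻‖² + ‖y₊−y⁻‖²)`. -/
theorem bregman_pam_sufficient_decrease
    {E F : Type*} [NormedAddCommGroup E] [InnerProductSpace ℝ E]
    [NormedAddCommGroup F] [InnerProductSpace ℝ F]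
    (f h : E × F → ℝ) (ghx : E → F → E) (ghy : E → F → F) (σ η : ℝ)
    (hhx : ∀ y : F, ContDiff ℝ 2 (fun x : E => h (x, y)))
    (hhy : ∀ x : E, ContDiff ℝ 2 (fun y : F => h (x, y)))
    (hghx : ∀ (y : F) (x v : E), fderiv ℝ (fun x' : E => h (x', y)) x v = ⟪ghx x y, v⟫)
    (hghy : ∀ (x : E) (y w : F), fderiv ℝ (fun y' : F => h (x, y')) y w = ⟪ghy x y, w⟫)
    (hσ : 0 < σ)
    (hstrongx : ∀ (y : F) (x v : E),
      iteratedFDeriv ℝ 2 (fun x' : E => h (x', y)) x ![v, v] ≥ σ * ‖v‖ ^ 2)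
    (hstrongy : ∀ (x : E) (y w : F),
      iteratedFDeriv ℝ 2 (fun y' : F => h (x, y')) y ![w, w] ≥ σ * ‖w‖ ^ 2)
    (hη : 0 < η)
    (xm : E) (ym : F) (xp : E) (yp : F)
    (hminx : ∀ x : E,
      f (xp, ym) + (1 / η) * (h (xp, ym) - h (xm, ym) - ⟪ghx xm ym, xp - xm⟫) ≤
        f (x, ym) + (1 / η) * (h (x, ym) - h (xm, ym) - ⟪ghx xm ym, x - xm⟫))
    (hminy : ∀ y : F,
      f (xp, yp) + (1 / η) * (h (xp, yp) - h (xp, ym) - ⟪ghy xp ym, yp - ym⟫) ≤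
        f (xp, y) + (1 / η) * (h (xp, y) - h (xp, ym) - ⟪ghy xp ym, y - ym⟫)) :
    f (xm, ym) - f (xp, yp) ≥ (σ / (2 * η)) * (‖xp - xm‖ ^ 2 + ‖yp - ym‖ ^ 2) := by
  have hDx : h (xp, ym) - h (xm, ym) - ⟪ghx xm ym, xp - xm⟫ ≥ σ / 2 * ‖xp - xm‖ ^ 2 :=
    bregman_strong_aux (fun x => h (x, ym)) (fun x => ghx x ym) σ (hhx ym)
      (hghx ym) (hstrongx ym) xp xm
  have hDy : h (xp, yp) - h (xp, ym) - ⟪ghy xp ym, yp - ym⟫ ≥ σ / 2 * ‖yp - ym‖ ^ 2 :=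
    bregman_strong_aux (fun y => h (xp, y)) (fun y => ghy xp y) σ (hhy xp)
      (hghy xp) (hstrongy xp) yp ym
  have h1 := hminx xm
  have h2 := hminy ym
  simp only [sub_self, inner_zero_right] at h1 h2
  have hη' : 0 < 1 / η := by positivity
  have e1 : (1 / η) * (σ / 2 * ‖xp - xm‖ ^ 2) ≤
      (1 / η) * (h (xp, ym) - h (xm, ym) - ⟪ghx xm ym, xp - xm⟫) :=
    mul_le_mul_of_nonneg_left hDx hη'.le
  have e2 : (1 / η) * (σ / 2 * ‖yp - ym‖ ^ 2) ≤
      (1 / η) * (h (xp, yp) - h (xp, ym) - ⟪ghy xp ym, yp - ym⟫) :=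
    mul_le_mul_of_nonneg_left hDy hη'.le
  have hrw : (σ / (2 * η)) * (‖xp - xm‖ ^ 2 + ‖yp - ym‖ ^ 2) =
      (1 / η) * (σ / 2 * ‖xp - xm‖ ^ 2) + (1 / η) * (σ / 2 * ‖yp - ym‖ ^ 2) := by
    field_simp
  rw [hrw]
  linarith
end

section
/- Let E and F be real inner product spaces, and let f, h : E × F → ℝ be such that for every y ∈ F the functions x ↦ f(x,y) and x ↦ h(x,y) are twice continuously differentiable with |D²(f(·,y))(x)(v,v)| ≤ L₁·D²(h(·,y))(x)(v,v) and D²(h(·,y))(x)(v,v) ≥ σ‖v‖² for all x, v, and symmetrically for every x ∈ E the functions y ↦ f(x,y) and y ↦ h(x,y) are twice continuously differentiable with |D²(f(x,·))(y)(w,w)| ≤ L₂·D²(h(x,·))(y)(w,w) and D²(h(x,·))(y)(w,w) ≥ σ‖w‖² (σ > 0, L₁, L₂ > 0). Let 0 < η < 1/max{L₁, L₂}, (x⁻, y⁻) ∈ E × F, let x₊ be a global minimizer over E of x ↦ ⟪∇(f(·,y⁻))(x⁻), x − x⁻⟫ + (1/η)·D_{h(·,y⁻)}(x, x⁻), and let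 y₊ be a global minimizer over F of y ↦ ⟪∇(f(x₊,·))(y⁻), y − y⁻⟫ + (1/η)·D_{h(x₊,·)}(y, y⁻). Then f(x⁻, y⁻) − f(x₊, y₊) ≥ (1/η − max{L₁, L₂})·(σ/2)·(‖x₊ − x⁻‖² + ‖y₊ − y⁻‖²). (Sufficient decrease of one Bregman proximal alternating linearized minimization step.) -/
open scoped RealInnerProductSpace


theorem key_bregman {E : Type*} [NormedAddCommGroup E] [NormedSpace ℝ E]
    (g : E → ℝ) (hg : ContDiff ℝ 2 g) (m : ℝ)
    (hm : ∀ x v, m * ‖v‖ ^ 2 ≤ iteratedFDeriv ℝ 2 g x ![v, v]) (v u : E) :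
    m / 2 * ‖u - v‖ ^ 2 ≤ g u - g v - fderiv ℝ g v (u - v) := by
  set w := u - v with hw
  set Lc : ℝ → E := fun t => v + t • w with hLc
  have hdiff : Differentiable ℝ g := hg.differentiable (by norm_num)
  have hG : ContDiff ℝ 1 (fderiv ℝ g) := hg.fderiv_right (by norm_num)
  have hGdiff : Differentiable ℝ (fderiv ℝ g) := hG.differentiable (by norm_num)
  have hL : ∀ t : ℝ, HasDerivAt Lc w t := by
    intro t
    have h2 : HasDerivAt Lc _ t := ((hasDerivAt_id t).smul_const w).const_add v
    simpa using h2
  have hphi : ∀ t : ℝ, HasDerivAt (fun s => g (Lc s)) (fderiv ℝ g (Lc t) w) t := by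
    intro t
    exact (hdiff (Lc t)).hasFDerivAt.comp_hasDerivAt t (hL t)
  have hphi' : ∀ t : ℝ, HasDerivAt (fun s => fderiv ℝ g (Lc s) w)
      (iteratedFDeriv ℝ 2 g (Lc t) ![w, w]) t := by
    intro t
    have h1 : HasDerivAt (fun s => fderiv ℝ g (Lc s)) (fderiv ℝ (fderiv ℝ g) (Lc t) w) t :=
      (hGdiff (Lc t)).hasFDerivAt.comp_hasDerivAt t (hL t)
    have h2 := h1.clm_apply (hasDerivAt_const t w)
    have h3 : iteratedFDeriv ℝ 2 g (Lc t) ![w, w] = fderiv ℝ (fderiv ℝ g) (Lc t) w w := by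
      rw [iteratedFDeriv_two_apply]; simp
    rw [h3]
    simpa using h2
  set c : ℝ := fderiv ℝ g v w with hc
  set Φ : ℝ → ℝ := fun t => fderiv ℝ g (Lc t) w - c - m * t * ‖w‖ ^ 2 with hΦ
  set ψ : ℝ → ℝ := fun t => g (Lc t) - g v - t * c - m / 2 * t ^ 2 * ‖w‖ ^ 2 with hψ
  have hψ' : ∀ t : ℝ, HasDerivAt ψ (Φ t) t := by
    intro t
    have h1 := ((hphi t).sub_const (g v)).sub ((hasDerivAt_id t).mul_const c)
    have h2 : HasDerivAt (fun s : ℝ => m / 2 * s ^ 2 * ‖w‖ ^ 2)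
        (m / 2 * (2 * t) * ‖w‖ ^ 2) t := by
      have := ((hasDerivAt_pow 2 t).const_mul (m / 2)).mul_const (‖w‖ ^ 2)
      simpa [mul_comm, mul_assoc, mul_left_comm] using this
    have h3 := h1.sub h2
    have h4 : HasDerivAt ψ _ t := h3
    convert h4 using 1
    show (fderiv ℝ g (Lc t)) w - c - m * t * ‖w‖ ^ 2 = _
    ring
  have hΦ' : ∀ t : ℝ, HasDerivAt Φ (iteratedFDeriv ℝ 2 g (Lc t) ![w, w] - m * ‖w‖ ^ 2) t := by
    intro t
    have h1 := ((hphi' t).sub_const c).sub (((hasDerivAt_id t).const_mul m).mul_const (‖w‖ ^ 2))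
    have h2 : HasDerivAt Φ _ t := h1
    simpa using h2
  have hΦmono : Monotone Φ :=
    monotone_of_deriv_nonneg (fun t => (hΦ' t).differentiableAt) (fun t => by
      rw [(hΦ' t).deriv]
      have := hm (Lc t) w
      linarith)
  have hΦ0 : Φ 0 = 0 := by simp [hΦ, hLc, hc]
  have hΦnonneg : ∀ t : ℝ, 0 ≤ t → 0 ≤ Φ t := fun t ht => hΦ0 ▸ hΦmono ht
  have hψmono : MonotoneOn ψ (Set.Icc (0:ℝ) 1) := by
    refine monotoneOn_of_deriv_nonneg (convex_Icc 0 1)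
      (fun t _ => ((hψ' t).continuousAt).continuousWithinAt)
      (fun t _ => ((hψ' t).differentiableAt).differentiableWithinAt) (fun t ht => ?_)
    rw [(hψ' t).deriv]
    exact hΦnonneg t (by simp [interior_Icc] at ht; linarith [ht.1])
  have h01 := hψmono (Set.mem_Icc.mpr ⟨le_refl 0, zero_le_one⟩)
    (Set.mem_Icc.mpr ⟨zero_le_one, le_refl 1⟩) zero_le_one
  have hψ0 : ψ 0 = 0 := by simp [hψ, hLc]
  have hψ1 : ψ 1 = g u - g v - c - m / 2 * ‖w‖ ^ 2 := by
    simp [hψ, hLc, hw]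
  rw [hψ0, hψ1] at h01
  linarith

theorem rel_upper {E : Type*} [NormedAddCommGroup E] [NormedSpace ℝ E]
    (f h : E → ℝ) (hf : ContDiff ℝ 2 f) (hh : ContDiff ℝ 2 h) (L : ℝ)
    (hrel : ∀ x v, |iteratedFDeriv ℝ 2 f x ![v, v]| ≤ L * iteratedFDeriv ℝ 2 h x ![v, v])
    (v u : E) :
    f u - f v - fderiv ℝ f v (u - v) ≤ L * (h u - h v - fderiv ℝ h v (u - v)) := by
  set g : E → ℝ := fun x => L * h x - f x with hgdef
  have hg : ContDiff ℝ 2 g := (contDiff_const.mul hh).sub hf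
  have hsec : ∀ x w, (0:ℝ) * ‖w‖ ^ 2 ≤ iteratedFDeriv ℝ 2 g x ![w, w] := by
    intro x w
    have e : g = fun x => (L • h) x + (-f) x := by
      funext x; simp [hgdef, sub_eq_add_neg, smul_eq_mul]
    have e1 : iteratedFDeriv ℝ 2 g x ![w, w]
        = L * iteratedFDeriv ℝ 2 h x ![w, w] - iteratedFDeriv ℝ 2 f x ![w, w] := by
      rw [e, iteratedFDeriv_add_apply' (by exact_mod_cast (hh.const_smul L).contDiffAt) (by exact_mod_cast hf.neg.contDiffAt)]
      rw [ContinuousMultilinearMap.add_apply,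
        iteratedFDeriv_const_smul_apply (by exact_mod_cast hh.contDiffAt), iteratedFDeriv_neg_apply]
      simp [sub_eq_add_neg]
    have := abs_le.mp (hrel x w)
    rw [e1]; simp; linarith [this.1]
  have hkey := key_bregman g hg 0 hsec v u
  have hdfh : DifferentiableAt ℝ h v := hh.differentiable (by norm_num) v
  have hdff : DifferentiableAt ℝ f v := hf.differentiable (by norm_num) v
  have e2 : fderiv ℝ g v (u - v)
      = L * fderiv ℝ h v (u - v) - fderiv ℝ f v (u - v) := by
    rw [hgdef]
    rw [fderiv_fun_sub (hdfh.const_mul L) hdff, fderiv_const_mul hdfh L]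
    simp
  rw [e2] at hkey
  simp only [hgdef] at hkey
  have h0 : (0:ℝ) / 2 * ‖u - v‖ ^ 2 = 0 := by ring
  rw [h0] at hkey
  linarith

/-- **Sufficient decrease of one Bregman proximal alternating linearized minimization
(B-PALM) step.** Under relative bi-smoothness of `f` w.r.t. a `σ`-strongly bi-convex
kernel `h`, with `0 < η < 1/max{L₁,L₂}`, the B-PALM step satisfies
`f(x⁻,y⁻) − f(x₊,y₊) ≥ (1/η − max{L₁,L₂})(σ/2)(‖x₊−x⁻‖² + ‖y₊−y⁻‖²)`. -/
theorem bregman_palm_sufficient_decrease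
    {E F : Type*} [NormedAddCommGroup E] [InnerProductSpace ℝ E]
    [NormedAddCommGroup F] [InnerProductSpace ℝ F]
    (f h : E × F → ℝ)
    (gfx : E → F → E) (gfy : E → F → F) (ghx : E → F → E) (ghy : E → F → F)
    (σ L₁ L₂ η : ℝ)
    (hfx : ∀ y : F, ContDiff ℝ 2 (fun x : E => f (x, y)))
    (hfy : ∀ x : E, ContDiff ℝ 2 (fun y : F => f (x, y)))
    (hhx : ∀ y : F, ContDiff ℝ 2 (fun x : E => h (x, y)))
    (hhy : ∀ x : E, ContDiff ℝ 2 (fun y : F => h (x, y)))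
    (hgfx : ∀ (y : F) (x v : E), fderiv ℝ (fun x' : E => f (x', y)) x v = ⟪gfx x y, v⟫)
    (hgfy : ∀ (x : E) (y w : F), fderiv ℝ (fun y' : F => f (x, y')) y w = ⟪gfy x y, w⟫)
    (hghx : ∀ (y : F) (x v : E), fderiv ℝ (fun x' : E => h (x', y)) x v = ⟪ghx x y, v⟫)
    (hghy : ∀ (x : E) (y w : F), fderiv ℝ (fun y' : F => h (x, y')) y w = ⟪ghy x y, w⟫)
    (hσ : 0 < σ) (hL₁ : 0 < L₁) (hL₂ : 0 < L₂)
    (hrelx : ∀ (y : F) (x v : E),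
      |iteratedFDeriv ℝ 2 (fun x' : E => f (x', y)) x ![v, v]| ≤
        L₁ * iteratedFDeriv ℝ 2 (fun x' : E => h (x', y)) x ![v, v])
    (hrely : ∀ (x : E) (y w : F),
      |iteratedFDeriv ℝ 2 (fun y' : F => f (x, y')) y ![w, w]| ≤
        L₂ * iteratedFDeriv ℝ 2 (fun y' : F => h (x, y')) y ![w, w])
    (hstrongx : ∀ (y : F) (x v : E),
      iteratedFDeriv ℝ 2 (fun x' : E => h (x', y)) x ![v, v] ≥ σ * ‖v‖ ^ 2)
    (hstrongy : ∀ (x : E) (y w : F),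
      iteratedFDeriv ℝ 2 (fun y' : F => h (x, y')) y ![w, w] ≥ σ * ‖w‖ ^ 2)
    (hη0 : 0 < η) (hη1 : η < 1 / max L₁ L₂)
    (xm : E) (ym : F) (xp : E) (yp : F)
    (hminx : ∀ x : E,
      ⟪gfx xm ym, xp - xm⟫ + (1 / η) * (h (xp, ym) - h (xm, ym) - ⟪ghx xm ym, xp - xm⟫) ≤
        ⟪gfx xm ym, x - xm⟫ + (1 / η) * (h (x, ym) - h (xm, ym) - ⟪ghx xm ym, x - xm⟫))
    (hminy : ∀ y : F,
      ⟪gfy xp ym, yp - ym⟫ + (1 / η) * (h (xp, yp) - h (xp, ym) - ⟪ghy xp ym, yp - ym⟫) ≤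
        ⟪gfy xp ym, y - ym⟫ + (1 / η) * (h (xp, y) - h (xp, ym) - ⟪ghy xp ym, y - ym⟫)) :
    f (xm, ym) - f (xp, yp) ≥
      (1 / η - max L₁ L₂) * (σ / 2) * (‖xp - xm‖ ^ 2 + ‖yp - ym‖ ^ 2) := by
  classical
  set Lm : ℝ := max L₁ L₂ with hLm
  have hLmpos : 0 < Lm := lt_max_iff.mpr (Or.inl hL₁)
  have hηLm : Lm < 1 / η := by
    have h1 : η * Lm < 1 := (lt_div_iff₀ hLmpos).mp hη1
    rw [lt_div_iff₀ hη0]; linarith [mul_comm η Lm]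
  have hpos : 0 ≤ 1 / η - Lm := by linarith
  -- x-step
  set Dx : ℝ := h (xp, ym) - h (xm, ym) - ⟪ghx xm ym, xp - xm⟫ with hDxdef
  have hDx_ge : σ / 2 * ‖xp - xm‖ ^ 2 ≤ Dx := by
    have := key_bregman (fun x => h (x, ym)) (hhx ym) σ (fun x v => hstrongx ym x v) xm xp
    rwa [hghx] at this
  have hDx0 : 0 ≤ Dx := le_trans (by positivity) hDx_ge
  have hfup : f (xp, ym) - f (xm, ym) - ⟪gfx xm ym, xp - xm⟫ ≤ L₁ * Dx := by
    have := rel_upper (fun x => f (x, ym)) (fun x => h (x, ym)) (hfx ym) (hhx ym) L₁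
      (fun x v => hrelx ym x v) xm xp
    rwa [hgfx, hghx] at this
  have hmin0 : ⟪gfx xm ym, xp - xm⟫ + (1 / η) * Dx ≤ 0 := by
    have := hminx xm
    simpa [hDxdef] using this
  have hL1le : L₁ ≤ Lm := le_max_left _ _
  have step1 : (1 / η - Lm) * (σ / 2) * ‖xp - xm‖ ^ 2 ≤ f (xm, ym) - f (xp, ym) := by
    nlinarith [mul_nonneg (sub_nonneg.mpr hL1le) hDx0,
      mul_nonneg hpos (sub_nonneg.mpr hDx_ge)]
  -- y-step
  set Dy : ℝ := h (xp, yp) - h (xp, ym) - ⟪ghy xp ym, yp - ym⟫ with hDydef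
  have hDy_ge : σ / 2 * ‖yp - ym‖ ^ 2 ≤ Dy := by
    have := key_bregman (fun y => h (xp, y)) (hhy xp) σ (fun y w => hstrongy xp y w) ym yp
    rwa [hghy] at this
  have hDy0 : 0 ≤ Dy := le_trans (by positivity) hDy_ge
  have hfup' : f (xp, yp) - f (xp, ym) - ⟪gfy xp ym, yp - ym⟫ ≤ L₂ * Dy := by
    have := rel_upper (fun y => f (xp, y)) (fun y => h (xp, y)) (hfy xp) (hhy xp) L₂
      (fun y w => hrely xp y w) ym yp
    rwa [hgfy, hghy] at this
  have hmin0' : ⟪gfy xp ym, yp - ym⟫ + (1 / η) * Dy ≤ 0 := by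
    have := hminy ym
    simpa [hDydef] using this
  have hL2le : L₂ ≤ Lm := le_max_right _ _
  have step2 : (1 / η - Lm) * (σ / 2) * ‖yp - ym‖ ^ 2 ≤ f (xp, ym) - f (xp, yp) := by
    nlinarith [mul_nonneg (sub_nonneg.mpr hL2le) hDy0,
      mul_nonneg hpos (sub_nonneg.mpr hDy_ge)]
  have : (1 / η - Lm) * (σ / 2) * (‖xp - xm‖ ^ 2 + ‖yp - ym‖ ^ 2) ≤
      f (xm, ym) - f (xp, yp) := by nlinarith
  exact this
end

section
/- Let E be a nontrivial finite-dimensional real inner product space, let d ≥ 2 be a natural number, and let α, σ > 0. Define h : E → ℝ by h(x) = (α/d)·‖x‖^d + (σ/2)·‖x‖² + 1. Then h is twice continuously differentiable, for all x, v ∈ E its second derivative satisfies D²h(x)(v,v) ≥ (α·‖x‖^{d−2} + σ)·‖v‖², and h is super-coercive, i.e. h(x)/‖x‖ → ∞ as ‖x‖ → ∞. -/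
open scoped RealInnerProductSpace
open Filter

set_option maxHeartbeats 1000000
set_option synthInstance.maxHeartbeats 400000

open Asymptotics

section Aux

variable {E : Type*} [NormedAddCommGroup E] [InnerProductSpace ℝ E]

lemma hasFDerivAt_norm_of_ne {x : E} (hx : x ≠ 0) :
    HasFDerivAt (fun y : E => ‖y‖) (‖x‖⁻¹ • innerSL ℝ x) x := by
  have hx' : ‖x‖ ≠ 0 := norm_ne_zero_iff.mpr hx
  have h2 : HasFDerivAt (fun y : E => ‖y‖ ^ 2) (2 • innerSL ℝ x) x :=
    (hasStrictFDerivAt_norm_sq x).hasFDerivAt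
  have hs : HasDerivAt Real.sqrt (1 / (2 * ‖x‖)) (‖x‖ ^ 2) := by
    have := Real.hasDerivAt_sqrt (x := ‖x‖ ^ 2) (pow_ne_zero 2 hx')
    simpa [Real.sqrt_sq (norm_nonneg x)] using this
  have key := hs.comp_hasFDerivAt x h2
  have heq : (Real.sqrt ∘ fun y : E => ‖y‖ ^ 2) = fun y : E => ‖y‖ := by
    funext y; simp [Function.comp, Real.sqrt_sq (norm_nonneg y)]
  rw [heq] at key
  have hcoef : (1 / (2 * ‖x‖)) • (2 • innerSL ℝ x) = ‖x‖⁻¹ • innerSL ℝ x := by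
    ext y
    simp only [ContinuousLinearMap.smul_apply, smul_eq_mul]
    field_simp
    ring
  rwa [hcoef] at key

lemma hasFDerivAt_norm_pow_of_ne (m : ℕ) {x : E} (hx : x ≠ 0) :
    HasFDerivAt (fun y : E => ‖y‖ ^ m)
      (((m : ℝ) * ‖x‖ ^ m / ‖x‖ ^ 2) • innerSL ℝ x) x := by
  have hx' : ‖x‖ ≠ 0 := norm_ne_zero_iff.mpr hx
  have key := (hasDerivAt_pow m ‖x‖).comp_hasFDerivAt x (hasFDerivAt_norm_of_ne hx)
  have heq : ((· ^ m) ∘ fun y : E => ‖y‖) = fun y : E => ‖y‖ ^ m := rfl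
  rw [heq] at key
  have hcoef : ((m : ℝ) * ‖x‖ ^ (m - 1)) • (‖x‖⁻¹ • innerSL ℝ x)
      = ((m : ℝ) * ‖x‖ ^ m / ‖x‖ ^ 2) • innerSL ℝ x := by
    rw [smul_smul]
    congr 1
    cases m with
    | zero => simp
    | succ k =>
      have : ‖x‖ ^ (k + 1) = ‖x‖ ^ k * ‖x‖ := pow_succ _ _
      field_simp [this]
      simp only [Nat.add_sub_cancel, pow_succ]
  rwa [hcoef] at key

lemma hasFDerivAt_norm_pow (m : ℕ) (hm : 2 ≤ m) (x : E) :
    HasFDerivAt (fun y : E => ‖y‖ ^ m)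
      (((m : ℝ) * ‖x‖ ^ m / ‖x‖ ^ 2) • innerSL ℝ x) x := by
  rcases eq_or_ne x 0 with rfl | hx
  · have hz : (((m : ℝ) * ‖(0 : E)‖ ^ m / ‖(0 : E)‖ ^ 2) • innerSL ℝ (0 : E)) = 0 := by
      ext y; simp
    rw [hz]
    rw [hasFDerivAt_iff_isLittleO_nhds_zero]
    have h1 : (fun y : E => ‖y‖ ^ m) =o[nhds 0] fun y => y :=
      isLittleO_norm_pow_id (lt_of_lt_of_le one_lt_two (by exact_mod_cast hm))
    refine h1.congr' ?_ (by rfl)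
    filter_upwards with y
    simp [zero_pow (by omega : m ≠ 0)]
  · exact hasFDerivAt_norm_pow_of_ne m hx


noncomputable def rinnerSL : E →L[ℝ] E →L[ℝ] ℝ := innerSL ℝ

@[simp] lemma rinnerSL_apply (x y : E) : rinnerSL x y = ⟪x, y⟫ := rfl

noncomputable def kernT (x : E) : E →L[ℝ] E →L[ℝ] ℝ :=
  (innerSL ℝ x).smulRight (innerSL ℝ x)

noncomputable def kernF (α σ : ℝ) (n : ℕ) (x : E) : E →L[ℝ] ℝ :=
  (α * ‖x‖ ^ n + σ) • innerSL ℝ x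

noncomputable def kernB (α σ : ℝ) (n : ℕ) (x : E) : E →L[ℝ] E →L[ℝ] ℝ :=
  (α * ‖x‖ ^ n + σ) • rinnerSL
    + (α * n * ‖x‖ ^ n / ‖x‖ ^ 2) • kernT x

lemma kernB_apply (α σ : ℝ) (n : ℕ) (x u v : E) :
    kernB α σ n x u v = (α * ‖x‖ ^ n + σ) * ⟪u, v⟫
      + (α * n * ‖x‖ ^ n / ‖x‖ ^ 2) * (⟪x, u⟫ * ⟪x, v⟫) := by
  simp [kernB, kernT, mul_assoc]

lemma hasFDerivAt_kernF (α σ : ℝ) (n : ℕ) (x : E) :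
    HasFDerivAt (kernF (E := E) α σ n) (kernB α σ n x) x := by
  rcases eq_or_ne x 0 with rfl | hx
  · rcases Nat.eq_zero_or_pos n with rfl | hn
    · -- n = 0 : kernF is linear
      have heq : kernF (E := E) α σ 0 = fun y => ((α + σ) • rinnerSL (E := E)) y := by
        funext y; ext v; simp [kernF]
      have hB : kernB α σ 0 (0 : E) = (α + σ) • rinnerSL (E := E) := by
        ext u v; simp [kernB, kernT]
      rw [heq, hB]
      exact ((α + σ) • rinnerSL (E := E)).hasFDerivAt
    · have hn' : n ≠ 0 := hn.ne'
      have hB : kernB α σ n (0 : E) = σ • rinnerSL (E := E) := by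
        ext u v; simp [kernB, kernT, zero_pow hn']
      rw [hB, hasFDerivAt_iff_isLittleO_nhds_zero]
      have key : (fun z : E => (α * ‖z‖ ^ n) • innerSL ℝ z) =o[nhds 0] fun z : E => z := by
        have h1 : (fun z : E => ‖z‖ ^ (n + 1)) =o[nhds 0] fun z : E => z :=
          isLittleO_norm_pow_id (by omega)
        have h2 : (fun z : E => (α * ‖z‖ ^ n) • innerSL ℝ z)
            =O[nhds 0] fun z : E => ‖z‖ ^ (n + 1) := by
          apply Asymptotics.IsBigO.of_bound |α|
          filter_upwards with z
          have hb : ‖(α * ‖z‖ ^ n) • innerSL ℝ z‖ ≤ |α| * ‖z‖ ^ n * ‖z‖ := by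
            simpa [innerSL_apply_norm, Real.norm_eq_abs] using
              norm_smul_le (α * ‖z‖ ^ n) (innerSL ℝ z)
          refine hb.trans (le_of_eq ?_)
          have h3 : ‖‖z‖ ^ (n + 1)‖ = ‖z‖ ^ (n + 1) := by
            rw [Real.norm_eq_abs, abs_of_nonneg (by positivity)]
          rw [h3, pow_succ]
          ring
        exact h2.trans_isLittleO h1
      refine Asymptotics.IsLittleO.congr' key ?_ (by rfl)
      filter_upwards with z
      ext v
      simp [kernF, zero_pow hn', rinnerSL, innerSL_apply_apply]
      erw [innerSL_apply_apply]
      ring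
  · -- x ≠ 0
    have hc : HasFDerivAt (fun y : E => α * ‖y‖ ^ n + σ)
        (α • (((n : ℝ) * ‖x‖ ^ n / ‖x‖ ^ 2) • innerSL ℝ x)) x :=
      ((hasFDerivAt_norm_pow_of_ne n hx).const_mul α).add_const σ
    have key := hc.smul ((rinnerSL (E := E)).hasFDerivAt (x := x))
    have heq : (fun y : E => (α * ‖y‖ ^ n + σ) • rinnerSL (E := E) y) = kernF (E := E) α σ n :=
      rfl
    rw [show ((fun y : E => α * ‖y‖ ^ n + σ) • ⇑(rinnerSL (E := E))) = kernF (E := E) α σ n from heq] at key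
    refine key.congr_fderiv ?_
    ext u v
    rw [kernB_apply]
    simp only [ContinuousLinearMap.add_apply, ContinuousLinearMap.smul_apply,
      ContinuousLinearMap.smulRight_apply, smul_eq_mul, rinnerSL_apply, innerSL_apply_apply,
      real_inner_smul_left]
    ring

lemma continuous_kernT : Continuous (kernT (E := E)) := by
  have : Continuous fun p : (E →L[ℝ] ℝ) × (E →L[ℝ] ℝ) => p.1.smulRight p.2 :=
    isBoundedBilinearMap_smulRight.continuous
  exact this.comp (((innerSL ℝ).continuous).prodMk ((innerSL ℝ).continuous))

lemma norm_kernT_le (x : E) : ‖kernT x‖ ≤ ‖x‖ ^ 2 := by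
  rw [kernT, ContinuousLinearMap.norm_smulRight_apply, innerSL_apply_norm, sq]

lemma squeeze_clm {f : E → E →L[ℝ] E →L[ℝ] ℝ} {a : E → ℝ} (h : ∀ z, ‖f z‖ ≤ a z)
    (h' : Filter.Tendsto a (nhds 0) (nhds 0)) : Filter.Tendsto f (nhds 0) (nhds 0) :=
  by exact squeeze_zero_norm (f := f) h h'

lemma continuous_kernB (α σ : ℝ) (n : ℕ) : Continuous (kernB (E := E) α σ n) := by
  unfold kernB
  have := (inferInstance : IsTopologicalAddGroup (E →L[ℝ] E →L[ℝ] ℝ)).toContinuousAdd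
  refine Continuous.add (M := E →L[ℝ] E →L[ℝ] ℝ) ?_ ?_
  · exact ((continuous_const.mul (continuous_norm.pow n)).add continuous_const).smul continuous_const
  · rcases Nat.eq_zero_or_pos n with rfl | hn
    · have : (fun x : E => (α * (0 : ℕ) * ‖x‖ ^ (0 : ℕ) / ‖x‖ ^ 2) • kernT x)
          = fun _ : E => (0 : E →L[ℝ] E →L[ℝ] ℝ) := by
        funext x; ext u v; simp [kernT]
      rw [this]
      exact continuous_const
    · have hn' : n ≠ 0 := hn.ne'
      rw [continuous_iff_continuousAt]
      intro x
      rcases eq_or_ne x 0 with rfl | hx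
      · have h0 : (α * n * ‖(0 : E)‖ ^ n / ‖(0 : E)‖ ^ 2) • kernT (0 : E) = 0 := by
          ext u v; simp [kernT, zero_pow hn']
        show Filter.Tendsto (fun z : E => (α * ↑n * ‖z‖ ^ n / ‖z‖ ^ 2) • kernT z) (nhds 0)
          (nhds ((α * ↑n * ‖(0:E)‖ ^ n / ‖(0:E)‖ ^ 2) • kernT (0:E)))
        rw [h0]
        have hbound : ∀ z : E, ‖(α * n * ‖z‖ ^ n / ‖z‖ ^ 2) • kernT z‖
            ≤ |α| * n * ‖z‖ ^ n := by
          intro z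
          have hb : ‖(α * n * ‖z‖ ^ n / ‖z‖ ^ 2) • kernT z‖
              ≤ |α * n * ‖z‖ ^ n / ‖z‖ ^ 2| * ‖kernT z‖ := by
            have := ContinuousLinearMap.opNorm_smul_le (α * (n : ℝ) * ‖z‖ ^ n / ‖z‖ ^ 2)
              (kernT z)
            rwa [Real.norm_eq_abs] at this
          refine hb.trans ?_
          rcases eq_or_ne z 0 with rfl | hz
          · simp only [norm_zero, zero_pow hn', mul_zero, zero_div, abs_zero, zero_mul]
            positivity
          · have hz' : (0:ℝ) < ‖z‖ := norm_pos_iff.mpr hz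
            have : |α * n * ‖z‖ ^ n / ‖z‖ ^ 2| = |α| * n * ‖z‖ ^ n / ‖z‖ ^ 2 := by
              rw [abs_div, abs_mul, abs_mul]
              congr 1
              · rw [Nat.abs_cast, abs_of_nonneg (pow_nonneg (norm_nonneg z) n)]
              · rw [abs_of_nonneg (by positivity)]
            rw [this]
            calc |α| * n * ‖z‖ ^ n / ‖z‖ ^ 2 * ‖kernT z‖
                ≤ |α| * n * ‖z‖ ^ n / ‖z‖ ^ 2 * ‖z‖ ^ 2 := by
                  apply mul_le_mul_of_nonneg_left (norm_kernT_le z) (by positivity)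
              _ = |α| * n * ‖z‖ ^ n := by field_simp
        have htend : Filter.Tendsto (fun z : E => |α| * n * ‖z‖ ^ n) (nhds 0) (nhds 0) := by
          have hcont : Continuous fun z : E => |α| * (n : ℝ) * ‖z‖ ^ n :=
            continuous_const.mul (continuous_norm.pow n)
          have := hcont.tendsto 0
          simpa [zero_pow hn'] using this
        exact squeeze_clm hbound htend
      · have hx' : ‖x‖ ≠ 0 := norm_ne_zero_iff.mpr hx
        have hc : ContinuousAt (fun z : E => α * n * ‖z‖ ^ n / ‖z‖ ^ 2) x := by
          apply ContinuousAt.div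
          · exact ((continuous_const.mul (continuous_norm.pow n)).continuousAt)
          · exact ((continuous_norm.pow 2).continuousAt)
          · exact pow_ne_zero 2 hx'
        exact hc.smul continuous_kernT.continuousAt

end Aux

/-- The Bregman kernel `h(x) = (α/d)‖x‖^d + (σ/2)‖x‖² + 1` (with `d ≥ 2`, `α, σ > 0`)
is twice continuously differentiable, its second derivative satisfies
`D²h(x)(v,v) ≥ (α‖x‖^{d−2} + σ)‖v‖²`, and `h` is super-coercive. -/
theorem polynomial_kernel_properties
    {E : Type*} [NormedAddCommGroup E] [InnerProductSpace ℝ E]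
    [FiniteDimensional ℝ E] [Nontrivial E]
    (d : ℕ) (hd : 2 ≤ d) (α σ : ℝ) (hα : 0 < α) (hσ : 0 < σ)
    (h : E → ℝ)
    (hdef : ∀ x : E, h x = (α / d) * ‖x‖ ^ d + (σ / 2) * ‖x‖ ^ 2 + 1) :
    ContDiff ℝ 2 h ∧
      (∀ x v : E,
        iteratedFDeriv ℝ 2 h x ![v, v] ≥ (α * ‖x‖ ^ (d - 2) + σ) * ‖v‖ ^ 2) ∧
      Tendsto (fun x : E => h x / ‖x‖) (comap norm atTop) atTop := by
  obtain ⟨n, rfl⟩ : ∃ n, d = n + 2 := ⟨d - 2, by omega⟩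
  have hh : h = fun y : E => (α / (((n + 2 : ℕ) : ℝ))) * ‖y‖ ^ (n + 2)
      + (σ / 2) * ‖y‖ ^ 2 + 1 := funext hdef
  subst hh
  have hn2 : ((n + 2 : ℕ) : ℝ) ≠ 0 := by positivity
  -- first derivative
  have hf₁ : ∀ x : E, HasFDerivAt
      (fun y : E => (α / (((n + 2 : ℕ) : ℝ))) * ‖y‖ ^ (n + 2) + (σ / 2) * ‖y‖ ^ 2 + 1)
      (kernF α σ n x) x := by
    intro x
    have h1 := (hasFDerivAt_norm_pow (n + 2) (by omega) x).const_mul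
      (α / (((n + 2 : ℕ) : ℝ)))
    have h2 := (hasFDerivAt_norm_pow 2 le_rfl x).const_mul (σ / 2)
    have h3 := (h1.add h2).add_const 1
    have heq : (α / (((n + 2 : ℕ) : ℝ)))
          • ((((n + 2 : ℕ) : ℝ) * ‖x‖ ^ (n + 2) / ‖x‖ ^ 2) • innerSL ℝ x)
        + (σ / 2) • ((((2 : ℕ) : ℝ) * ‖x‖ ^ 2 / ‖x‖ ^ 2) • innerSL ℝ x)
        = kernF α σ n x := by
      ext v
      simp only [ContinuousLinearMap.add_apply, ContinuousLinearMap.smul_apply,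
        innerSL_apply_apply, smul_eq_mul, kernF, rinnerSL_apply]
      rcases eq_or_ne x 0 with rfl | hx
      · simp
      · have hx' : ‖x‖ ≠ 0 := norm_ne_zero_iff.mpr hx
        field_simp
        ring
    rw [heq] at h3
    exact h3
  have hdiffh : Differentiable ℝ
      (fun y : E => (α / (((n + 2 : ℕ) : ℝ))) * ‖y‖ ^ (n + 2) + (σ / 2) * ‖y‖ ^ 2 + 1) :=
    fun x => (hf₁ x).differentiableAt
  have hfderiv : fderiv ℝ
      (fun y : E => (α / (((n + 2 : ℕ) : ℝ))) * ‖y‖ ^ (n + 2) + (σ / 2) * ‖y‖ ^ 2 + 1)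
      = kernF α σ n := funext fun x => (hf₁ x).fderiv
  have hdiff1 : Differentiable ℝ (kernF (E := E) α σ n) :=
    fun x => (hasFDerivAt_kernF α σ n x).differentiableAt
  have hfderiv2 : fderiv ℝ (kernF (E := E) α σ n) = kernB α σ n :=
    funext fun x => (hasFDerivAt_kernF α σ n x).fderiv
  refine ⟨?_, ?_, ?_⟩
  · -- C²
    rw [show (2 : WithTop ℕ∞) = (1 : WithTop ℕ∞) + 1 by norm_num,
      contDiff_succ_iff_fderiv]
    refine ⟨hdiffh, by simp, ?_⟩
    rw [hfderiv, contDiff_one_iff_fderiv]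
    exact ⟨hdiff1, hfderiv2 ▸ continuous_kernB α σ n⟩
  · -- Hessian lower bound
    intro x v
    rw [ge_iff_le, iteratedFDeriv_two_apply, hfderiv, hfderiv2]
    simp only [Matrix.cons_val_zero, Matrix.cons_val_one, Matrix.head_cons]
    rw [kernB_apply, real_inner_self_eq_norm_sq]
    have hq : 0 ≤ α * n * ‖x‖ ^ n / ‖x‖ ^ 2 := by positivity
    have hsq : 0 ≤ (inner ℝ x v * inner ℝ x v : ℝ) := mul_self_nonneg _
    have hnn : (n + 2) - 2 = n := by omega
    rw [hnn]
    nlinarith [mul_nonneg hq hsq]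
  · -- super-coercive
    have h1 : Tendsto (fun x : E => ‖x‖) (comap norm atTop) atTop := tendsto_comap
    apply tendsto_atTop_mono' _ ?_ (h1.const_mul_atTop (by positivity : (0:ℝ) < σ / 2))
    filter_upwards [h1.eventually (eventually_ge_atTop 1)] with x hx
    have hx0 : (0:ℝ) < ‖x‖ := lt_of_lt_of_le one_pos hx
    show σ / 2 * ‖x‖
      ≤ (α / (((n + 2 : ℕ) : ℝ)) * ‖x‖ ^ (n + 2) + σ / 2 * ‖x‖ ^ 2 + 1) / ‖x‖
    have hkey : σ / 2 * ‖x‖ ^ 2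
        ≤ (α / (((n + 2 : ℕ) : ℝ))) * ‖x‖ ^ (n + 2) + (σ / 2) * ‖x‖ ^ 2 + 1 := by
      have h2 : 0 ≤ (α / (((n + 2 : ℕ) : ℝ))) * ‖x‖ ^ (n + 2) := by positivity
      linarith
    calc σ / 2 * ‖x‖ = (σ / 2 * ‖x‖ ^ 2) / ‖x‖ := by
          rw [sq]
          field_simp
      _ ≤ ((α / (((n + 2 : ℕ) : ℝ))) * ‖x‖ ^ (n + 2) + (σ / 2) * ‖x‖ ^ 2 + 1) / ‖x‖ :=
          (div_le_div_iff_of_pos_right hx0).mpr hkey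
end

section
/- Let n ≥ 1 and d ≥ 2 be natural numbers, let α, σ > 0, let p be a multivariate real polynomial in n variables of total degree at most d, and let f : ℝⁿ → ℝ (with ℝⁿ the Euclidean space) be the evaluation map f(x) = p(x₁, …, xₙ). Define h : ℝⁿ → ℝ by h(x) = (α/d)·‖x‖^d + (σ/2)·‖x‖² + 1. Then there exists L > 0 such that f is L-relatively smooth with respect to h, i.e. |D²f(x)(v,v)| ≤ L·D²h(x)(v,v) for all x, v ∈ ℝⁿ. -/
open scoped RealInnerProductSpace
open Real

section KernelSide
variable {E : Type*} [NormedAddCommGroup E] [InnerProductSpace ℝ E]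

noncomputable def innerCLM (E : Type*) [NormedAddCommGroup E] [InnerProductSpace ℝ E] :
    E →L[ℝ] E →L[ℝ] ℝ :=
  LinearMap.mkContinuous
    { toFun := fun y => innerSL ℝ y
      map_add' := fun y z => by ext v; simp [inner_add_left]
      map_smul' := fun c y => by ext v; simp [inner_smul_left] }
    1 (fun y => by simp [innerSL_apply_norm])

@[simp] lemma innerCLM_apply (y v : E) : innerCLM E y v = ⟪y, v⟫ := rfl

theorem hasFDerivAt_norm_rpow_ne {x : E} (hx : x ≠ 0) (q : ℝ) :
    HasFDerivAt (fun x : E ↦ ‖x‖ ^ q) ((q * ‖x‖ ^ (q - 2)) • innerSL ℝ x) x := by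
  apply HasStrictFDerivAt.hasFDerivAt
  convert (hasStrictFDerivAt_norm_sq x).rpow_const (p := q / 2) (by simp [hx]) using 0
  simp_rw [← Real.rpow_natCast_mul (norm_nonneg _), ← Nat.cast_smul_eq_nsmul ℝ, smul_smul]
  ring_nf

theorem kernel_hasFDerivAt (d : ℕ) (hd : 2 ≤ d) (α σ : ℝ) (y : E) :
    HasFDerivAt (fun y : E => (α / d) * ‖y‖ ^ d + (σ / 2) * ‖y‖ ^ 2 + 1)
      ((α * ‖y‖ ^ ((d : ℝ) - 2) + σ) • innerSL ℝ y) y := by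
  have hd1 : (1 : ℝ) < (d : ℝ) := by exact_mod_cast lt_of_lt_of_le one_lt_two hd
  have hd0 : (d : ℝ) ≠ 0 := by positivity
  have A := (hasFDerivAt_norm_rpow y hd1).const_mul (α / d)
  have B := ((hasFDerivAt_id y).norm_sq).const_mul (σ / 2)
  have hAB := (A.add B).add_const 1
  have hfun : (fun y : E => (α / d) * ‖y‖ ^ (d : ℝ) + (σ / 2) * ‖y‖ ^ 2 + 1)
      = fun y : E => (α / d) * ‖y‖ ^ d + (σ / 2) * ‖y‖ ^ 2 + 1 := by
    funext z; rw [Real.rpow_natCast]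
  simp only [id_eq] at hAB
  simp only [Pi.add_apply] at hAB
  rw [hfun] at hAB
  refine hAB.congr_fderiv ?_
  ext v
  simp only [ContinuousLinearMap.add_apply, ContinuousLinearMap.coe_smul', Pi.smul_apply,
    innerSL_apply_apply, ContinuousLinearMap.smul_apply, ContinuousLinearMap.coe_comp',
    Function.comp_apply, ContinuousLinearMap.coe_id', id_eq, smul_eq_mul, nsmul_eq_mul]
  field_simp
  ring

end KernelSide

section K2
variable {E : Type*} [NormedAddCommGroup E] [InnerProductSpace ℝ E]

set_option synthInstance.maxHeartbeats 1000000 in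
set_option maxHeartbeats 2000000 in
theorem kernel_G_deriv (d : ℕ) (hd : 2 ≤ d) (α σ : ℝ) (hα : 0 < α) (hσ : 0 < σ) (x : E) :
    ∃ B : E →L[ℝ] E →L[ℝ] ℝ,
      HasFDerivAt (fun y : E => (α * ‖y‖ ^ ((d : ℝ) - 2) + σ) • innerSL ℝ y) B x ∧
      ∀ v : E, α * ‖x‖ ^ (d - 2) * ‖v‖ ^ 2 + σ * ‖v‖ ^ 2 ≤ B v v := by
  by_cases hx : x = 0
  · subst hx
    by_cases hd2 : d = 2
    · subst hd2
      have hfun : (fun y : E => (α * ‖y‖ ^ (((2:ℕ) : ℝ) - 2) + σ) • innerSL ℝ y)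
          = ⇑((α + σ) • innerCLM E) := by
        funext y; ext v
        have h0 : (((2:ℕ):ℝ) - 2) = 0 := by norm_num
        simp [h0, Real.rpow_zero]
      refine ⟨(α + σ) • innerCLM E, ?_, ?_⟩
      · rw [hfun]; exact ((α + σ) • innerCLM E).hasFDerivAt
      · intro v
        have hv : ((α + σ) • innerCLM E) v v = (α + σ) * ‖v‖ ^ 2 := by
          simp [real_inner_self_eq_norm_sq]
        rw [hv]
        refine le_of_eq ?_
        norm_num
        ring
    · -- d ≥ 3
      have hd3 : 3 ≤ d := by omega
      have hq1 : (1 : ℝ) ≤ (d : ℝ) - 2 := by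
        have : (3 : ℝ) ≤ (d : ℝ) := by exact_mod_cast hd3
        linarith
      refine ⟨σ • innerCLM E, ?_, ?_⟩
      · have hsplit : (fun y : E => (α * ‖y‖ ^ ((d : ℝ) - 2) + σ) • innerSL ℝ y)
            = fun y : E => (σ • innerCLM E) y + (α * ‖y‖ ^ ((d : ℝ) - 2)) • innerSL ℝ y := by
          funext y; ext v
          simp [add_smul, inner_smul_left]
          ring
        rw [hsplit]
        have h0 : HasFDerivAt (fun y : E => (α * ‖y‖ ^ ((d : ℝ) - 2)) • innerSL ℝ y)
            (0 : E →L[ℝ] E →L[ℝ] ℝ) 0 := by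
          rw [hasFDerivAt_iff_isLittleO_nhds_zero]
          simp only [zero_add, norm_zero, map_zero, smul_zero, sub_zero, ContinuousLinearMap.zero_apply]
          rw [Asymptotics.isLittleO_iff]
          intro ε hε
          have htend : Filter.Tendsto (fun y : E => α * ‖y‖ ^ ((d : ℝ) - 2)) (nhds 0)
              (nhds 0) := by
            have hcont := (continuousAt_id (x := (0:E))).norm.rpow_const
              (p := (d : ℝ) - 2) (Or.inr (by linarith))
            have h00 : (0:ℝ) = α * (‖(0:E)‖ ^ ((d:ℝ) - 2)) := by
              rw [norm_zero, Real.zero_rpow (by linarith)]; ring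
            rw [h00]
            exact (hcont.tendsto.const_mul α)
          have hev := htend.eventually (eventually_le_nhds hε)
          filter_upwards [hev] with y hy
          have h1 : ‖(α * ‖y‖ ^ ((d : ℝ) - 2)) • innerSL ℝ y‖
              = (α * ‖y‖ ^ ((d : ℝ) - 2)) * ‖y‖ := by
            have hrw : (α * ‖y‖ ^ ((d : ℝ) - 2)) • innerSL ℝ y
                = innerSL ℝ ((α * ‖y‖ ^ ((d : ℝ) - 2)) • y) := by
              ext w; simp [inner_smul_left]
            rw [hrw, innerSL_apply_norm, norm_smul, Real.norm_eq_abs,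
              abs_of_nonneg (by positivity)]
          rw [h1]
          simpa using mul_le_mul_of_nonneg_right hy (norm_nonneg y)
        have hsum := (σ • innerCLM E).hasFDerivAt.add h0
        rw [add_zero] at hsum
        exact hsum
      · intro v
        simp [real_inner_self_eq_norm_sq, norm_zero, zero_pow (show d - 2 ≠ 0 by omega)]
  · -- x ≠ 0
    have hq0 : (0 : ℝ) ≤ (d : ℝ) - 2 := by
      have : (2 : ℝ) ≤ (d : ℝ) := by exact_mod_cast hd
      linarith
    have hc := ((hasFDerivAt_norm_rpow_ne hx ((d : ℝ) - 2)).const_mul α).add_const σ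
    rw [smul_smul] at hc
    have hin : HasFDerivAt (fun y : E => innerSL ℝ y) (innerCLM E) x :=
      (innerCLM E).hasFDerivAt
    have hG := hc.smul hin
    refine ⟨_, hG, ?_⟩
    intro v
    have heval : ((α * ‖x‖ ^ ((d:ℝ) - 2) + σ) • innerCLM E +
        ContinuousLinearMap.smulRight
          ((α * (((d : ℝ) - 2) * ‖x‖ ^ ((d : ℝ) - 2 - 2))) • innerSL ℝ x) (innerSL ℝ x)) v v
        = (α * ‖x‖ ^ ((d:ℝ) - 2) + σ) * (inner ℝ v v)
          + (α * (((d : ℝ) - 2) * ‖x‖ ^ ((d : ℝ) - 2 - 2))) * ((inner ℝ x v) * (inner ℝ x v)) := by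
      simp [ContinuousLinearMap.smulRight_apply, inner_smul_left]
      ring
    rw [heval]
    have h1 : (0:ℝ) ≤ (α * (((d : ℝ) - 2) * ‖x‖ ^ ((d : ℝ) - 2 - 2))) * ((inner ℝ x v) * (inner ℝ x v)) :=
      mul_nonneg (mul_nonneg hα.le (mul_nonneg hq0
        (Real.rpow_nonneg (norm_nonneg x) _))) (mul_self_nonneg _)
    have h2 : ‖x‖ ^ ((d:ℝ) - 2) = ‖x‖ ^ (d - 2 : ℕ) := by
      rw [← Real.rpow_natCast ‖x‖ (d - 2)]
      congr 1
      push_cast [Nat.cast_sub hd]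
      ring
    rw [real_inner_self_eq_norm_sq, h2] at heval ⊢
    nlinarith [h1]
end K2

section K3
variable {E : Type*} [NormedAddCommGroup E] [InnerProductSpace ℝ E]

theorem kernel_lower (d : ℕ) (hd : 2 ≤ d) (α σ : ℝ) (hα : 0 < α) (hσ : 0 < σ)
    (h : E → ℝ) (hdef : ∀ y : E, h y = (α / d) * ‖y‖ ^ d + (σ / 2) * ‖y‖ ^ 2 + 1)
    (x v : E) :
    α * ‖x‖ ^ (d - 2) * ‖v‖ ^ 2 + σ * ‖v‖ ^ 2 ≤ iteratedFDeriv ℝ 2 h x ![v, v] := by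
  have hh : h = fun y : E => (α / d) * ‖y‖ ^ d + (σ / 2) * ‖y‖ ^ 2 + 1 := funext hdef
  have hfd : fderiv ℝ h = fun y : E => (α * ‖y‖ ^ ((d : ℝ) - 2) + σ) • innerSL ℝ y := by
    funext y
    rw [hh]
    exact (kernel_hasFDerivAt d hd α σ y).fderiv
  obtain ⟨B, hB, hBv⟩ := kernel_G_deriv d hd α σ hα hσ x
  have : iteratedFDeriv ℝ 2 h x ![v, v] = B v v := by
    rw [iteratedFDeriv_two_apply, hfd]
    have := hB.fderiv
    rw [this]
    simp
  rw [this]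
  exact hBv v

end K3

variable {n : ℕ}

local notation "E" => EuclideanSpace ℝ (Fin n)

lemma coord_abs_le_norm (x : E) (i : Fin n) : |x i| ≤ ‖x‖ := by
  rw [EuclideanSpace.norm_eq]
  have h1 : |x i| = Real.sqrt (|x i| ^ 2) := by
    rw [Real.sqrt_sq_eq_abs, abs_abs]
  rw [h1]
  apply Real.sqrt_le_sqrt
  have := Finset.single_le_sum (f := fun j => ‖x j‖ ^ 2)
    (fun j _ => by positivity) (Finset.mem_univ i)
  simpa [Real.norm_eq_abs] using this

lemma coord_contDiff (i : Fin n) (m : WithTop ℕ∞) : ContDiff ℝ m (fun x : E => x i) :=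
  by change ContDiff ℝ m ⇑(EuclideanSpace.proj (𝕜 := ℝ) i); exact (EuclideanSpace.proj (𝕜 := ℝ) i : E →L[ℝ] ℝ).contDiff

lemma mono_contDiff (s : Fin n → ℕ) (m : WithTop ℕ∞) :
    ContDiff ℝ m (fun x : E => ∏ i, x i ^ s i) :=
  contDiff_prod fun i _ => (coord_contDiff i m).pow (s i)

lemma coord_eq (i : Fin n) : (fun x : E => x i) = ⇑(EuclideanSpace.proj (𝕜 := ℝ) i) := rfl

-- derivative bounds for the coordinate function
lemma ell_bound0 (i : Fin n) (x : E) :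
    ‖iteratedFDeriv ℝ 0 (fun x : E => x i) x‖ ≤ 1 + ‖x‖ := by
  rw [norm_iteratedFDeriv_zero]
  have := coord_abs_le_norm x i
  rw [Real.norm_eq_abs]
  linarith [norm_nonneg x]

lemma ell_bound1 (i : Fin n) (x : E) :
    ‖iteratedFDeriv ℝ 1 (fun x : E => x i) x‖ ≤ 1 := by
  apply ContinuousMultilinearMap.opNorm_le_bound (M := 1) (by norm_num)
  intro m
  rw [iteratedFDeriv_one_apply]
  rw [coord_eq, (EuclideanSpace.proj (𝕜 := ℝ) i).fderiv]
  have : ‖EuclideanSpace.proj i (m 0)‖ ≤ ‖m 0‖ := by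
    simpa [Real.norm_eq_abs] using coord_abs_le_norm (m 0) i
  simpa using this

lemma ell_bound2 (i : Fin n) (x : E) :
    ‖iteratedFDeriv ℝ 2 (fun x : E => x i) x‖ = 0 := by
  rw [norm_eq_zero]
  ext m
  rw [iteratedFDeriv_two_apply]
  have hfd : fderiv ℝ (fun x : E => x i) = fun _ : E => (EuclideanSpace.proj (𝕜 := ℝ) i : E →L[ℝ] ℝ) := by
    funext y
    rw [coord_eq, (EuclideanSpace.proj (𝕜 := ℝ) i).fderiv]
  rw [hfd, fderiv_fun_const]
  simp

theorem mono_bound : ∀ (N : ℕ) (s : Fin n → ℕ), (∑ i, s i) = N →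
    ∃ C : ℝ, 0 < C ∧ ∀ k, k ≤ 2 → ∀ x : E,
      ‖iteratedFDeriv ℝ k (fun x : E => ∏ i, x i ^ s i) x‖
        ≤ C * (1 + ‖x‖) ^ ((N : ℝ) - k) := by
  intro N
  induction N with
  | zero =>
    intro s hs
    refine ⟨1, one_pos, ?_⟩
    have hs0 : ∀ i, s i = 0 := fun i =>
      (Finset.sum_eq_zero_iff.mp hs) i (Finset.mem_univ i)
    have hfun : (fun x : E => ∏ i, x i ^ s i) = fun _ : E => (1:ℝ) := by
      funext x; simp [hs0]
    rw [hfun]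
    intro k hk x
    have ha0 : (0:ℝ) < 1 + ‖x‖ := by positivity
    match k with
    | 0 =>
      rw [norm_iteratedFDeriv_zero]
      simp
    | (k+1) =>
      rw [iteratedFDeriv_const_of_ne (Nat.succ_ne_zero k)]
      simp only [Pi.zero_apply, norm_zero, one_mul]
      exact (Real.rpow_pos_of_pos ha0 _).le
  | succ N IH =>
    intro s hs
    have hex : ∃ i, s i ≠ 0 := by
      by_contra hcon
      push_neg at hcon
      simp [hcon] at hs
    obtain ⟨i, hi⟩ := hex
    set t : Fin n → ℕ := Function.update s i (s i - 1) with ht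
    have hts : ∑ j, t j = N := by
      have h2 : ∑ j, s j = s i + ∑ j ∈ Finset.univ \ {i}, s j :=
        Finset.sum_eq_add_sum_sdiff_singleton_of_mem (Finset.mem_univ i) s
      have h3 : ∑ j, t j = t i + ∑ j ∈ Finset.univ \ {i}, t j :=
        Finset.sum_eq_add_sum_sdiff_singleton_of_mem (Finset.mem_univ i) t
      have h4 : ∑ j ∈ Finset.univ \ {i}, t j = ∑ j ∈ Finset.univ \ {i}, s j := by
        apply Finset.sum_congr rfl
        intro j hj
        have : j ≠ i := by
          simp only [Finset.mem_sdiff, Finset.mem_singleton] at hj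
          exact hj.2
        simp [ht, Function.update_of_ne this]
      have h5 : t i = s i - 1 := by simp [ht]
      omega
    obtain ⟨C, hC, hB⟩ := IH t hts
    have hsplit : (fun x : E => ∏ j, x j ^ s j)
        = fun x : E => (∏ j, x j ^ t j) * x i := by
      funext x
      have hfac : ∀ j, x j ^ s j = x j ^ t j * (if j = i then x j else 1) := by
        intro j
        by_cases hj : j = i
        · subst hj
          rw [if_pos rfl, ht, Function.update_self, ← pow_succ]
          congr 1
          omega
        · simp [ht, Function.update_of_ne hj, hj]
      simp_rw [hfac]
      rw [Finset.prod_mul_distrib]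
      congr 1
      simp
    refine ⟨3 * C + 1, by positivity, ?_⟩
    intro k hk x
    rw [hsplit]
    have ha0 : (0:ℝ) < 1 + ‖x‖ := by positivity
    have ha1 : (1:ℝ) ≤ 1 + ‖x‖ := by linarith [norm_nonneg x]
    have hFt : ContDiff ℝ (2 : WithTop ℕ∞) (fun x : E => ∏ j, x j ^ t j) := mono_contDiff t 2
    have hell : ContDiff ℝ (2 : WithTop ℕ∞) (fun x : E => x i) := coord_contDiff i 2
    have hmul := norm_iteratedFDeriv_mul_le hFt hell x
      (show (k : WithTop ℕ∞) ≤ 2 by exact_mod_cast hk)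
    have hpos : ∀ r : ℝ, (0:ℝ) < (1 + ‖x‖) ^ r := fun r => Real.rpow_pos_of_pos ha0 r
    have hb0 := hB 0 (by norm_num) x
    have hb1 := hB 1 (by norm_num) x
    have hb2 := hB 2 (by norm_num) x
    rw [show (N:ℝ) - ((0:ℕ):ℝ) = (N:ℝ) by push_cast; ring] at hb0
    rw [show (N:ℝ) - ((1:ℕ):ℝ) = (N:ℝ) - 1 by push_cast; ring] at hb1
    rw [show (N:ℝ) - ((2:ℕ):ℝ) = (N:ℝ) - 2 by push_cast; ring] at hb2
    have hl0 := ell_bound0 i x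
    have hl1 := ell_bound1 i x
    have hl2 := ell_bound2 i x
    -- rpow step-down identities
    have hstep1 : (1 + ‖x‖) ^ ((N:ℝ) - 1) * (1 + ‖x‖) = (1 + ‖x‖) ^ ((N:ℝ)) := by
      rw [← Real.rpow_add_one ha0.ne']
      congr 1; ring
    have hstep2 : (1 + ‖x‖) ^ ((N:ℝ) - 2) * (1 + ‖x‖) = (1 + ‖x‖) ^ ((N:ℝ) - 1) := by
      rw [← Real.rpow_add_one ha0.ne']
      congr 1; ring
    interval_cases k
    · -- k = 0
      rw [show (((N+1:ℕ)):ℝ) - ((0:ℕ):ℝ) = (N:ℝ) + 1 by push_cast; ring]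
      simp only [Finset.sum_range_succ, Finset.sum_range_zero, Nat.choose_self,
        Nat.cast_one, one_mul, zero_add, Nat.sub_self] at hmul
      have hstep0 : (1 + ‖x‖) ^ ((N:ℝ)) * (1 + ‖x‖) = (1 + ‖x‖) ^ ((N:ℝ) + 1) := by
        rw [← Real.rpow_add_one ha0.ne']
      have hT : ‖iteratedFDeriv ℝ 0 (fun x : E => ∏ j, x j ^ t j) x‖
          * ‖iteratedFDeriv ℝ 0 (fun x : E => x i) x‖
          ≤ C * (1 + ‖x‖) ^ ((N:ℝ) + 1) := by
        calc _ ≤ (C * (1 + ‖x‖) ^ ((N:ℝ))) * (1 + ‖x‖) :=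
              mul_le_mul hb0 hl0 (norm_nonneg _) (by positivity)
          _ = _ := by rw [mul_assoc, hstep0]
      refine le_trans hmul (le_trans hT ?_)
      nlinarith [hpos ((N:ℝ) + 1)]
    · -- k = 1
      rw [show (((N+1:ℕ)):ℝ) - ((1:ℕ):ℝ) = (N:ℝ) by push_cast; ring]
      simp only [Finset.sum_range_succ, Finset.sum_range_zero, Nat.choose_self,
        Nat.choose_zero_right, Nat.cast_one, one_mul, zero_add, Nat.sub_self,
        Nat.sub_zero] at hmul
      have hT0 : ‖iteratedFDeriv ℝ 0 (fun x : E => ∏ j, x j ^ t j) x‖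
          * ‖iteratedFDeriv ℝ 1 (fun x : E => x i) x‖
          ≤ C * (1 + ‖x‖) ^ ((N:ℝ)) := by
        calc _ ≤ (C * (1 + ‖x‖) ^ ((N:ℝ))) * 1 :=
              mul_le_mul hb0 hl1 (norm_nonneg _) (by positivity)
          _ = _ := by rw [mul_one]
      have hT1 : ‖iteratedFDeriv ℝ 1 (fun x : E => ∏ j, x j ^ t j) x‖
          * ‖iteratedFDeriv ℝ 0 (fun x : E => x i) x‖
          ≤ C * (1 + ‖x‖) ^ ((N:ℝ)) := by
        calc _ ≤ (C * (1 + ‖x‖) ^ ((N:ℝ) - 1)) * (1 + ‖x‖) :=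
              mul_le_mul hb1 hl0 (norm_nonneg _) (by positivity)
          _ = _ := by rw [mul_assoc, hstep1]
      refine le_trans hmul ?_
      nlinarith [hpos ((N:ℝ))]
    · -- k = 2
      rw [show (((N+1:ℕ)):ℝ) - ((2:ℕ):ℝ) = (N:ℝ) - 1 by push_cast; ring]
      simp only [Finset.sum_range_succ, Finset.sum_range_zero, Nat.choose_self,
        Nat.choose_zero_right, Nat.choose_one_right, Nat.cast_one, Nat.cast_ofNat,
        one_mul, zero_add, Nat.sub_self, Nat.sub_zero,
        show (2:ℕ) - 1 = 1 from rfl] at hmul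
      have hT0 : ‖iteratedFDeriv ℝ 0 (fun x : E => ∏ j, x j ^ t j) x‖
          * ‖iteratedFDeriv ℝ 2 (fun x : E => x i) x‖ = 0 := by
        rw [hl2, mul_zero]
      have hT1 : ‖iteratedFDeriv ℝ 1 (fun x : E => ∏ j, x j ^ t j) x‖
          * ‖iteratedFDeriv ℝ 1 (fun x : E => x i) x‖
          ≤ C * (1 + ‖x‖) ^ ((N:ℝ) - 1) := by
        calc _ ≤ (C * (1 + ‖x‖) ^ ((N:ℝ) - 1)) * 1 :=
              mul_le_mul hb1 hl1 (norm_nonneg _) (by positivity)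
          _ = _ := by rw [mul_one]
      have hT2 : ‖iteratedFDeriv ℝ 2 (fun x : E => ∏ j, x j ^ t j) x‖
          * ‖iteratedFDeriv ℝ 0 (fun x : E => x i) x‖
          ≤ C * (1 + ‖x‖) ^ ((N:ℝ) - 1) := by
        calc _ ≤ (C * (1 + ‖x‖) ^ ((N:ℝ) - 2)) * (1 + ‖x‖) :=
              mul_le_mul hb2 hl0 (norm_nonneg _) (by positivity)
          _ = _ := by rw [mul_assoc, hstep2]
      refine le_trans hmul ?_
      nlinarith [hpos ((N:ℝ) - 1)]

lemma norm_iteratedFDeriv_const_mul (c : ℝ) (g : E → ℝ) (hg : ContDiff ℝ 2 g) (x : E) :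
    ‖iteratedFDeriv ℝ 2 (fun y : E => c * g y) x‖ ≤ |c| * ‖iteratedFDeriv ℝ 2 g x‖ := by
  have hrw : (fun y : E => c * g y) = c • g := by
    funext y; simp [smul_eq_mul]
  rw [hrw]
  apply ContinuousMultilinearMap.opNorm_le_bound (M := |c| * ‖iteratedFDeriv ℝ 2 g x‖)
    (by positivity)
  intro m
  rw [iteratedFDeriv_const_smul_apply hg.contDiffAt, ContinuousMultilinearMap.smul_apply,
    norm_smul, Real.norm_eq_abs, mul_assoc]
  exact mul_le_mul_of_nonneg_left (ContinuousMultilinearMap.le_opNorm _ m) (abs_nonneg c)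

theorem poly_D2_bound (d : ℕ) (p : MvPolynomial (Fin n) ℝ) (hdeg : p.totalDegree ≤ d) :
    ∃ C : ℝ, 0 < C ∧ ∀ x : E,
      ‖iteratedFDeriv ℝ 2 (fun x : E => MvPolynomial.eval (fun i => x i) p) x‖
        ≤ C * (1 + ‖x‖) ^ ((d : ℝ) - 2) := by
  have hrw : (fun x : E => MvPolynomial.eval (fun i => x i) p)
      = fun x : E => ∑ s ∈ p.support, MvPolynomial.coeff s p * ∏ i, x i ^ s i := by
    funext x
    rw [MvPolynomial.eval_eq']
  have H : ∀ s : Fin n →₀ ℕ, ∃ C : ℝ, 0 < C ∧ ∀ k, k ≤ 2 → ∀ x : E,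
      ‖iteratedFDeriv ℝ k (fun x : E => ∏ i, x i ^ s i) x‖
        ≤ C * (1 + ‖x‖) ^ (((∑ i, s i : ℕ) : ℝ) - k) :=
    fun s => mono_bound (∑ i, s i) s rfl
  choose Cs hCpos hCs using H
  refine ⟨∑ s ∈ p.support, |MvPolynomial.coeff s p| * Cs s + 1, ?_, ?_⟩
  · have : (0:ℝ) ≤ ∑ s ∈ p.support, |MvPolynomial.coeff s p| * Cs s :=
      Finset.sum_nonneg fun s _ => mul_nonneg (abs_nonneg _) (hCpos s).le
    linarith
  intro x
  rw [hrw]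
  have ha0 : (0:ℝ) < 1 + ‖x‖ := by positivity
  have ha1 : (1:ℝ) ≤ 1 + ‖x‖ := by linarith [norm_nonneg x]
  have hpos := Real.rpow_pos_of_pos ha0 ((d : ℝ) - 2)
  have hcd : ∀ s ∈ p.support, ContDiff ℝ (2:ℕ)
      (fun x : E => MvPolynomial.coeff s p * ∏ i, x i ^ s i) :=
    fun s _ => contDiff_const.mul (mono_contDiff (⇑s) 2)
  have hsum := iteratedFDeriv_sum (𝕜 := ℝ) (u := p.support)
      (f := fun s (x : E) => MvPolynomial.coeff s p * ∏ i, x i ^ s i) (i := 2) hcd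
  have hx : iteratedFDeriv ℝ 2
      (fun x : E => ∑ s ∈ p.support, MvPolynomial.coeff s p * ∏ i, x i ^ s i) x
      = ∑ s ∈ p.support, iteratedFDeriv ℝ 2
          (fun x : E => MvPolynomial.coeff s p * ∏ i, x i ^ s i) x := by
    have := congrFun hsum x
    simpa using this
  rw [hx]
  calc ‖∑ s ∈ p.support, iteratedFDeriv ℝ 2
          (fun x : E => MvPolynomial.coeff s p * ∏ i, x i ^ s i) x‖
      ≤ ∑ s ∈ p.support, ‖iteratedFDeriv ℝ 2
          (fun x : E => MvPolynomial.coeff s p * ∏ i, x i ^ s i) x‖ :=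
        norm_sum_le _ _
    _ ≤ ∑ s ∈ p.support, (|MvPolynomial.coeff s p| * Cs s) * (1 + ‖x‖) ^ ((d:ℝ) - 2) := by
        apply Finset.sum_le_sum
        intro s hs
        have h1 := norm_iteratedFDeriv_const_mul (MvPolynomial.coeff s p)
          (fun x : E => ∏ i, x i ^ s i) (mono_contDiff (⇑s) 2) x
        have h2 := hCs s 2 (le_refl 2) x
        have hNs : (∑ i, s i) ≤ d := by
          refine le_trans ?_ hdeg
          have hsum_eq : s.sum (fun _ e => e) = ∑ i, s i :=
            Finsupp.sum_fintype _ _ (fun _ => rfl)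
          rw [← hsum_eq]
          exact MvPolynomial.le_totalDegree hs
        have h3 : (1 + ‖x‖) ^ (((∑ i, s i : ℕ) : ℝ) - 2) ≤ (1 + ‖x‖) ^ ((d:ℝ) - 2) := by
          apply Real.rpow_le_rpow_of_exponent_le ha1
          have : ((∑ i, s i : ℕ) : ℝ) ≤ (d : ℝ) := by exact_mod_cast hNs
          linarith
        calc ‖iteratedFDeriv ℝ 2 (fun x : E => MvPolynomial.coeff s p * ∏ i, x i ^ s i) x‖
            ≤ |MvPolynomial.coeff s p| * ‖iteratedFDeriv ℝ 2 (fun x : E => ∏ i, x i ^ s i) x‖ := h1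
          _ ≤ |MvPolynomial.coeff s p| * (Cs s * (1 + ‖x‖) ^ (((∑ i, s i : ℕ) : ℝ) - 2)) :=
              mul_le_mul_of_nonneg_left h2 (abs_nonneg _)
          _ ≤ |MvPolynomial.coeff s p| * (Cs s * (1 + ‖x‖) ^ ((d:ℝ) - 2)) := by
              apply mul_le_mul_of_nonneg_left _ (abs_nonneg _)
              exact mul_le_mul_of_nonneg_left h3 (hCpos s).le
          _ = (|MvPolynomial.coeff s p| * Cs s) * (1 + ‖x‖) ^ ((d:ℝ) - 2) := by ring
    _ = (∑ s ∈ p.support, |MvPolynomial.coeff s p| * Cs s) * (1 + ‖x‖) ^ ((d:ℝ) - 2) := by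
        rw [Finset.sum_mul]
    _ ≤ (∑ s ∈ p.support, |MvPolynomial.coeff s p| * Cs s + 1) * (1 + ‖x‖) ^ ((d:ℝ) - 2) := by
        nlinarith [hpos]

lemma onePlus_pow_le (m : ℕ) (b : ℝ) (hb : 0 ≤ b) : (1+b)^m ≤ 2^m * (1 + b^m) := by
  rcases le_total b 1 with h|h
  · have h1 : (1+b)^m ≤ 2^m := by
      apply pow_le_pow_left₀ (by linarith) (by linarith)
    nlinarith [pow_nonneg hb m, pow_pos (show (0:ℝ) < 2 by norm_num) m]
  · have h1 : (1+b)^m ≤ (2*b)^m := by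
      apply pow_le_pow_left₀ (by linarith) (by linarith)
    rw [mul_pow] at h1
    nlinarith [pow_pos (show (0:ℝ) < 2 by norm_num) m]


set_option maxHeartbeats 1000000 in
/-- Any multivariate real polynomial `p` of total degree at most `d` (`n ≥ 1`, `d ≥ 2`),
viewed as a function `f` on Euclidean space, is `L`-relatively smooth with respect to the
kernel `h(x) = (α/d)‖x‖^d + (σ/2)‖x‖² + 1` for some `L > 0`. -/
theorem polynomial_relatively_smooth
    (n d : ℕ) (hn : 1 ≤ n) (hd : 2 ≤ d) (α σ : ℝ) (hα : 0 < α) (hσ : 0 < σ)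
    (p : MvPolynomial (Fin n) ℝ) (hdeg : p.totalDegree ≤ d)
    (f : EuclideanSpace ℝ (Fin n) → ℝ)
    (hf : ∀ x : EuclideanSpace ℝ (Fin n), f x = MvPolynomial.eval (fun i => x i) p)
    (h : EuclideanSpace ℝ (Fin n) → ℝ)
    (hdef : ∀ x : EuclideanSpace ℝ (Fin n),
      h x = (α / d) * ‖x‖ ^ d + (σ / 2) * ‖x‖ ^ 2 + 1) :
    ∃ L : ℝ, 0 < L ∧ ∀ (x v : EuclideanSpace ℝ (Fin n)),
      |iteratedFDeriv ℝ 2 f x ![v, v]| ≤ L * iteratedFDeriv ℝ 2 h x ![v, v] := by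
  obtain ⟨C, hC, hF⟩ := poly_D2_bound (n := n) d p hdeg
  have hf' : f = fun x : EuclideanSpace ℝ (Fin n) => MvPolynomial.eval (fun i => x i) p :=
    funext hf
  set m := min α σ with hm
  have hm0 : 0 < m := lt_min hα hσ
  set L := C * 2 ^ (d - 2) / m with hL
  have hL0 : 0 < L := div_pos (mul_pos hC (by positivity)) hm0
  refine ⟨L, hL0, ?_⟩
  intro x v
  have hker := kernel_lower d hd α σ hα hσ h hdef x v
  have ha0 : (0:ℝ) < 1 + ‖x‖ := by positivity
  have h1 : |iteratedFDeriv ℝ 2 f x ![v, v]| ≤ ‖iteratedFDeriv ℝ 2 f x‖ * (‖v‖ * ‖v‖) := by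
    have hle := ContinuousMultilinearMap.le_opNorm (iteratedFDeriv ℝ 2 f x) ![v, v]
    rw [Real.norm_eq_abs] at hle
    have hp : (∏ i : Fin 2, ‖![v, v] i‖) = ‖v‖ * ‖v‖ := by
      rw [Fin.prod_univ_two]
      simp
    rw [hp] at hle
    exact hle
  have h2 : ‖iteratedFDeriv ℝ 2 f x‖ ≤ C * (1 + ‖x‖) ^ ((d:ℝ) - 2) := by
    rw [hf']; exact hF x
  have h3 : (1 + ‖x‖) ^ ((d:ℝ) - 2) = (1 + ‖x‖) ^ (d - 2 : ℕ) := by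
    rw [← Real.rpow_natCast (1 + ‖x‖) (d - 2)]
    congr 1
    push_cast [Nat.cast_sub hd]
    ring
  have h4 : (1 + ‖x‖) ^ (d - 2 : ℕ) ≤ 2 ^ (d - 2) * (1 + ‖x‖ ^ (d - 2)) :=
    onePlus_pow_le (d - 2) ‖x‖ (norm_nonneg x)
  have hLm : L * m = C * 2 ^ (d - 2) := by
    rw [hL]; field_simp
  have h5 : |iteratedFDeriv ℝ 2 f x ![v, v]|
      ≤ C * 2 ^ (d - 2) * (1 + ‖x‖ ^ (d - 2)) * ‖v‖ ^ 2 := by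
    calc |iteratedFDeriv ℝ 2 f x ![v, v]|
        ≤ ‖iteratedFDeriv ℝ 2 f x‖ * (‖v‖ * ‖v‖) := h1
      _ ≤ (C * (1 + ‖x‖) ^ ((d:ℝ) - 2)) * (‖v‖ * ‖v‖) :=
          mul_le_mul_of_nonneg_right h2 (by positivity)
      _ = (C * (1 + ‖x‖) ^ (d - 2 : ℕ)) * ‖v‖ ^ 2 := by rw [h3]; ring
      _ ≤ (C * (2 ^ (d - 2) * (1 + ‖x‖ ^ (d - 2)))) * ‖v‖ ^ 2 := by
          apply mul_le_mul_of_nonneg_right _ (by positivity)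
          exact mul_le_mul_of_nonneg_left h4 hC.le
      _ = C * 2 ^ (d - 2) * (1 + ‖x‖ ^ (d - 2)) * ‖v‖ ^ 2 := by ring
  have hms : m ≤ σ := min_le_right α σ
  have hma : m ≤ α := min_le_left α σ
  have hx0 : (0:ℝ) ≤ ‖x‖ ^ (d - 2) := by positivity
  have h6 : C * 2 ^ (d - 2) * (1 + ‖x‖ ^ (d - 2)) * ‖v‖ ^ 2
      ≤ L * (α * ‖x‖ ^ (d - 2) * ‖v‖ ^ 2 + σ * ‖v‖ ^ 2) := by
    rw [← hLm]
    nlinarith [mul_nonneg (mul_nonneg hL0.le (sub_nonneg.mpr hms)) (sq_nonneg ‖v‖),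
      mul_nonneg (mul_nonneg (mul_nonneg hL0.le (sub_nonneg.mpr hma)) hx0) (sq_nonneg ‖v‖)]
  have h7 : L * (α * ‖x‖ ^ (d - 2) * ‖v‖ ^ 2 + σ * ‖v‖ ^ 2)
      ≤ L * iteratedFDeriv ℝ 2 h x ![v, v] :=
    mul_le_mul_of_nonneg_left hker hL0.le
  linarith
end

section
/- Let E be a real inner product space. For w ∈ E define Π(w) := (τ(‖w‖)/‖w‖)·w if w ≠ 0 and Π(0) := 0, where for a ≥ 0, τ(a) := (2^{1/3}·(√(81a² + 12) + 9a)^{2/3} − 2·3^{1/3}) / (6^{2/3}·(√(81a² + 12) + 9a)^{1/3}). Then for every w ∈ E, the point x := Π(w) satisfies (‖x‖² + 1)·x = w, and x is the unique point of E with this property. -/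
/-- The explicit formula for the unique real root of the cubic `t³ + t = a`. -/
noncomputable def tau (a : ℝ) : ℝ :=
  ((2 : ℝ) ^ ((1 : ℝ) / 3) * (Real.sqrt (81 * a ^ 2 + 12) + 9 * a) ^ ((2 : ℝ) / 3) -
      2 * (3 : ℝ) ^ ((1 : ℝ) / 3)) /
    ((6 : ℝ) ^ ((2 : ℝ) / 3) * (Real.sqrt (81 * a ^ 2 + 12) + 9 * a) ^ ((1 : ℝ) / 3))

lemma tau_spec (a : ℝ) (ha : 0 ≤ a) : tau a ^ 3 + tau a = a := by
  have hd2 : Real.sqrt (81 * a ^ 2 + 12) ^ 2 = 81 * a ^ 2 + 12 :=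
    Real.sq_sqrt (by positivity)
  have hd0 : 0 < Real.sqrt (81 * a ^ 2 + 12) := Real.sqrt_pos.2 (by positivity)
  set d := Real.sqrt (81 * a ^ 2 + 12) with hdd
  have hP : 0 < d + 9 * a := by nlinarith
  set S := (d + 9 * a) ^ ((1:ℝ)/3) with hSS
  have hS0 : 0 < S := Real.rpow_pos_of_pos hP _
  have hS3 : S ^ 3 = d + 9 * a := by
    rw [hSS, ← Real.rpow_natCast ((d + 9*a) ^ ((1:ℝ)/3)) 3, ← Real.rpow_mul hP.le]
    norm_num
  have h23 : (d + 9 * a) ^ ((2:ℝ)/3) = S ^ 2 := by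
    rw [hSS, ← Real.rpow_natCast ((d + 9*a) ^ ((1:ℝ)/3)) 2, ← Real.rpow_mul hP.le]
    norm_num
  set A := (2:ℝ) ^ ((1:ℝ)/3) with hAA
  set B := (3:ℝ) ^ ((1:ℝ)/3) with hBB
  have hA0 : 0 < A := Real.rpow_pos_of_pos two_pos _
  have hB0 : 0 < B := Real.rpow_pos_of_pos three_pos _
  have hA3 : A ^ 3 = 2 := by
    rw [hAA, ← Real.rpow_natCast ((2:ℝ) ^ ((1:ℝ)/3)) 3, ← Real.rpow_mul (by norm_num)]
    norm_num
  have hB3 : B ^ 3 = 3 := by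
    rw [hBB, ← Real.rpow_natCast ((3:ℝ) ^ ((1:ℝ)/3)) 3, ← Real.rpow_mul (by norm_num)]
    norm_num
  have hC : (6:ℝ) ^ ((2:ℝ)/3) = A ^ 2 * B ^ 2 := by
    have : (6:ℝ) = 2 * 3 := by norm_num
    rw [this, Real.mul_rpow (by norm_num) (by norm_num), hAA, hBB,
      ← Real.rpow_natCast ((2:ℝ) ^ ((1:ℝ)/3)) 2, ← Real.rpow_mul (by norm_num),
      ← Real.rpow_natCast ((3:ℝ) ^ ((1:ℝ)/3)) 2, ← Real.rpow_mul (by norm_num)]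
    norm_num
  have htau : tau a = (A * S ^ 2 - 2 * B) / (A ^ 2 * B ^ 2 * S) := by
    rw [tau, ← hdd, h23, hC]
  have hne : A ^ 2 * B ^ 2 * S ≠ 0 := by positivity
  have key : (A*S^2 - 2*B)^3 + (A*S^2 - 2*B)*(A^2*B^2*S)^2 = a * (A^2*B^2*S)^3 := by
    linear_combination (S^6 + A^2*B^4*S^4 - 2*A*B^5*S^2 - a*A^3*B^6*S^3 - 2*a*B^6*S^3) * hA3 +
    (-8 + 2*A^2*B*S^4 - 4*A*B^2*S^2 - 4*a*B^3*S^3 - 12*a*S^3) * hB3 +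
    (-36*a + 2*S^3 + 2*(d+9*a)) * hS3 + 2 * hd2
  rw [htau, div_pow, div_add_div _ _ (pow_ne_zero 3 hne) hne, div_eq_iff (by positivity)]
  linear_combination (A^2*B^2*S) * key

/-- The rescaling map `Π(w) = (τ(‖w‖)/‖w‖)·w` (and `Π(0) = 0`). -/
noncomputable def Pi' {E : Type*} [NormedAddCommGroup E] [InnerProductSpace ℝ E]
    (w : E) : E :=
  letI := Classical.dec (w = 0)
  if w = 0 then 0 else (tau ‖w‖ / ‖w‖) • w

lemma cubic_strictMono : StrictMono (fun r : ℝ => r ^ 3 + r) := fun a b h => by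
  simp only
  have h1 : 0 < b - a := sub_pos.2 h
  have h2 : 0 < a ^ 2 + a * b + b ^ 2 + 1 := by nlinarith [sq_nonneg (a + b), sq_nonneg a, sq_nonneg b]
  nlinarith [mul_pos h1 h2]


/-- For every `w`, the point `x = Π(w)` is the unique point satisfying
`(‖x‖² + 1)·x = w`. -/
theorem pi_inverts_cubic_map
    {E : Type*} [NormedAddCommGroup E] [InnerProductSpace ℝ E] (w : E) :
    (‖Pi' w‖ ^ 2 + 1) • Pi' w = w ∧
      ∀ x : E, (‖x‖ ^ 2 + 1) • x = w → x = Pi' w := by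

  by_cases hw : w = 0
  · subst hw
    have hP0 : Pi' (0 : E) = 0 := by simp [Pi']
    refine ⟨by simp [hP0], fun x hx => ?_⟩
    rw [hP0]
    rcases smul_eq_zero.1 hx with h | h
    · exact absurd h (by positivity)
    · exact h
  · have hw0 : 0 < ‖w‖ := norm_pos_iff.2 hw
    set t := tau ‖w‖ with htdef
    have ht : t ^ 3 + t = ‖w‖ := tau_spec _ (norm_nonneg w)
    have ht0 : 0 < t := by
      by_contra h
      push_neg at h
      nlinarith [mul_nonneg (neg_nonneg.2 h) (sq_nonneg t)]
    have hPi : Pi' w = (t / ‖w‖) • w := by simp [Pi', hw]; exact htdef.symm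
    have hnx : ‖Pi' w‖ = t := by
      rw [hPi, norm_smul, Real.norm_eq_abs, abs_of_nonneg (by positivity),
        div_mul_cancel₀ _ hw0.ne']
    have hne : t ^ 2 + 1 ≠ 0 := by positivity
    constructor
    · rw [hnx, hPi, smul_smul]
      have h1 : (t ^ 2 + 1) * (t / ‖w‖) = 1 := by
        field_simp
        linear_combination ht
      rw [h1, one_smul]
    · intro x hx
      have hs : (‖x‖ ^ 3 + ‖x‖) = ‖w‖ := by
        have h2 := congrArg norm hx
        rw [norm_smul, Real.norm_eq_abs, abs_of_nonneg (by positivity)] at h2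
        nlinarith [h2]
      have hst : ‖x‖ = t := cubic_strictMono.injective (by rw [hs, ← ht])
      rw [hst] at hx
      rw [hPi]
      have h3 : t / ‖w‖ = (t ^ 2 + 1)⁻¹ := by
        field_simp
        linear_combination ht
      rw [h3, ← hx, smul_smul, inv_mul_cancel₀ hne, one_smul]
end

section
/- Let n ≥ 1, let H and F be real symmetric n×n matrices, suppose H is positive definite, suppose F has a negative direction, i.e. there exists v ≠ 0 with vᵀFv < 0, and let η > 0. Then there exists a real number μ > 1 such that det((1 − μ)·H − η·F) = 0; equivalently, the matrix H⁻¹(H − ηF) has a real eigenvalue strictly greater than 1. (Strict saddles are unstable fixed points of Bregman gradient descent.) -/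
open Matrix
open scoped MatrixOrder

/-- **Strict saddles are unstable fixed points of Bregman gradient descent.**
If `H` is symmetric positive definite, `F` is symmetric with a negative direction, and
`η > 0`, then there is `μ > 1` with `det((1 − μ)H − ηF) = 0`; equivalently,
`H⁻¹(H − ηF)` has a real eigenvalue strictly greater than `1`. -/
theorem bgd_strict_saddle_unstable
    (n : ℕ) (hn : 1 ≤ n)
    (H F : Matrix (Fin n) (Fin n) ℝ)
    (hHsymm : H.IsSymm) (hFsymm : F.IsSymm)
    (hHpd : H.PosDef)
    (hFneg : ∃ v : Fin n → ℝ, v ≠ 0 ∧ v ⬝ᵥ (F *ᵥ v) < 0)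
    (η : ℝ) (hη : 0 < η) :
    ∃ μ : ℝ, 1 < μ ∧ ((1 - μ) • H - η • F).det = 0 := by
  obtain ⟨v, hv0, hvF⟩ := hFneg
  set S := CFC.sqrt H with hSdef
  have hSS : S * S = H := CFC.sqrt_mul_sqrt_self H hHpd.posSemidef.nonneg
  have hSherm : S.IsHermitian := (CFC.sqrt_nonneg H).posSemidef.1
  have hSunit : IsUnit S.det := by
    have hdet : S.det * S.det = H.det := by rw [← det_mul, hSS]
    have : S.det ≠ 0 := by
      intro h
      rw [h, mul_zero] at hdet
      exact hHpd.det_pos.ne' hdet.symm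
    exact this.isUnit
  have hSinv : S⁻¹ * S = 1 := nonsing_inv_mul S hSunit
  have hSinv' : S * S⁻¹ = 1 := mul_nonsing_inv S hSunit
  have hSinvherm : S⁻¹.IsHermitian := hSherm.inv
  set M := S⁻¹ * F * S⁻¹ with hMdef
  have hFherm : F.IsHermitian := by
    rw [Matrix.IsHermitian, conjTranspose_eq_transpose_of_trivial]
    exact hFsymm
  have hMherm : M.IsHermitian := by
    rw [Matrix.IsHermitian, hMdef, conjTranspose_mul, conjTranspose_mul,
      hSinvherm.eq, hFherm.eq, mul_assoc]
  -- F = S * M * S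
  have hFSMS : S * M * S = F := by
    rw [hMdef, ← mul_assoc, ← mul_assoc, hSinv', one_mul, mul_assoc, hSinv, mul_one]
  -- M has a negative eigenvalue
  have hMneg : ∃ i, hMherm.eigenvalues i < 0 := by
    by_contra h
    push_neg at h
    have hpsd : M.PosSemidef := hMherm.posSemidef_iff_eigenvalues_nonneg.mpr h
    have := hpsd.dotProduct_mulVec_nonneg (S *ᵥ v)
    simp only [RCLike.re_to_real, star_trivial] at this
    have hStrans : Sᵀ = S := by
      rw [← conjTranspose_eq_transpose_of_trivial, hSherm.eq]
    have hcalc : (S *ᵥ v) ⬝ᵥ (M *ᵥ (S *ᵥ v)) = v ⬝ᵥ (F *ᵥ v) := by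
      rw [mulVec_mulVec, ← hStrans, mulVec_transpose, dotProduct_mulVec,
        vecMul_vecMul, hStrans, ← mul_assoc, hFSMS, ← dotProduct_mulVec]
    rw [hcalc] at this
    exact absurd this (not_le.mpr hvF)
  obtain ⟨i, hei⟩ := hMneg
  set e := hMherm.eigenvalues i with hedef
  set v₀ : Fin n → ℝ := ⇑(hMherm.eigenvectorBasis i) with hv₀def
  have hv₀ne : v₀ ≠ 0 := by
    intro h
    apply hMherm.eigenvectorBasis.orthonormal.ne_zero i
    simpa [hv₀def] using h
  have hMv₀ : M *ᵥ v₀ = e • v₀ := hMherm.mulVec_eigenvectorBasis i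
  refine ⟨1 - η * e, by nlinarith, ?_⟩
  refine exists_mulVec_eq_zero_iff.mp ⟨S⁻¹ *ᵥ v₀, ?_, ?_⟩
  · intro h
    apply hv₀ne
    have := congrArg (fun w => S *ᵥ w) h
    simpa [mulVec_mulVec, hSinv'] using this
  · have hH : H *ᵥ (S⁻¹ *ᵥ v₀) = S *ᵥ v₀ := by
      rw [← hSS, mulVec_mulVec, mul_assoc, hSinv', mul_one]
    have hF : F *ᵥ (S⁻¹ *ᵥ v₀) = e • (S *ᵥ v₀) := by
      rw [← hFSMS, mulVec_mulVec, mul_assoc, hSinv', mul_one,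
        ← mulVec_mulVec, hMv₀, mulVec_smul]
    rw [sub_mulVec, smul_mulVec, smul_mulVec, hH, hF]
    rw [smul_smul]
    have h1 : (1 - (1 - η * e)) = η * e := by ring
    rw [h1, sub_self]
end

section
/- Let n ≥ 1, let H and F be real symmetric n×n matrices, suppose H is positive definite, suppose F has a negative direction, i.e. there exists v ≠ 0 with vᵀFv < 0, let η > 0, and suppose H + η·F is positive definite. Then there exists a real number μ > 1 such that det((1 − μ)·H − μ·η·F) = 0; equivalently, the matrix (H + ηF)⁻¹H has a real eigenvalue strictly greater than 1. (Strict saddles are unstable fixed points of the Bregman proximal point method.) -/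
open Matrix

/-- **Strict saddles are unstable fixed points of the Bregman proximal point method.**
If `H` is symmetric positive definite, `F` is symmetric with a negative direction,
`η > 0`, and `H + ηF` is positive definite, then there is `μ > 1` with
`det((1 − μ)H − μηF) = 0`; equivalently, `(H + ηF)⁻¹H` has a real eigenvalue strictly
greater than `1`. -/
theorem bppm_strict_saddle_unstable
    (n : ℕ) (hn : 1 ≤ n)
    (H F : Matrix (Fin n) (Fin n) ℝ)
    (hHsymm : H.IsSymm) (hFsymm : F.IsSymm)
    (hHpd : H.PosDef)
    (hFneg : ∃ v : Fin n → ℝ, v ≠ 0 ∧ v ⬝ᵥ (F *ᵥ v) < 0)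
    (η : ℝ) (hη : 0 < η)
    (hpd : (H + η • F).PosDef) :
    ∃ μ : ℝ, 1 < μ ∧ ((1 - μ) • H - (μ * η) • F).det = 0 := by
  obtain ⟨v, hv0, hvF⟩ := hFneg
  set A : Matrix (Fin n) (Fin n) ℝ := H + η • F with hA
  have hAinv : A⁻¹.PosDef := hpd.inv
  set S : Matrix (Fin n) (Fin n) ℝ := (open scoped MatrixOrder in CFC.sqrt A⁻¹) with hS
  have hSps : S.PosSemidef := (open scoped MatrixOrder in (CFC.sqrt_nonneg A⁻¹).posSemidef)
  have hSherm : S.IsHermitian := hSps.1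
  have hSsymm : Sᵀ = S := by
    rw [← conjTranspose_eq_transpose_of_trivial]; exact hSherm
  have hSS : S * S = A⁻¹ := (open scoped MatrixOrder in CFC.sqrt_mul_sqrt_self A⁻¹ hAinv.posSemidef.nonneg)
  -- S is invertible
  have hAdet : IsUnit A.det := hpd.det_pos.ne'.isUnit
  have hSdet : IsUnit S.det := by
    have h1 : S.det * S.det = A⁻¹.det := by rw [← det_mul, hSS]
    have h2 : A⁻¹.det ≠ 0 := hAinv.det_pos.ne'
    exact isUnit_iff_ne_zero.mpr (fun h => h2 (by rw [← h1, h, zero_mul]))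
  have hSSinv : S * S⁻¹ = 1 := mul_nonsing_inv S hSdet
  have hSinvS : S⁻¹ * S = 1 := nonsing_inv_mul S hSdet
  have hAeq : A = S⁻¹ * S⁻¹ := by
    rw [← Matrix.mul_inv_rev, hSS, nonsing_inv_nonsing_inv A hAdet]
  have hSAS : S * A * S = 1 := by
    rw [hAeq, ← mul_assoc, mul_assoc S S⁻¹, ← mul_assoc S S⁻¹, hSSinv, one_mul, hSinvS]
  set M : Matrix (Fin n) (Fin n) ℝ := S * H * S with hM
  have hHherm : H.IsHermitian := hHpd.1
  have hMherm : M.IsHermitian := by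
    have := isHermitian_mul_mul_conjTranspose S hHherm
    rwa [hSherm.eq] at this
  -- the test vector w
  set w : Fin n → ℝ := S⁻¹ *ᵥ v with hw
  have hSw : S *ᵥ w = v := by
    rw [hw, mulVec_mulVec, hSSinv, one_mulVec]
  have hw0 : w ≠ 0 := by
    intro h
    apply hv0
    rw [← hSw, h, mulVec_zero]
  have hsymmdot : ∀ (B : Matrix (Fin n) (Fin n) ℝ), Bᵀ = B →
      ∀ x u : Fin n → ℝ, x ⬝ᵥ (B *ᵥ u) = (B *ᵥ x) ⬝ᵥ u := by
    intro B hB x u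
    rw [dotProduct_mulVec, ← vecMul_transpose, hB]
  have hSinvsymm : S⁻¹ᵀ = S⁻¹ := by rw [transpose_nonsing_inv, hSsymm]
  have hwMw : w ⬝ᵥ (M *ᵥ w) = v ⬝ᵥ (H *ᵥ v) := by
    rw [hM, ← mulVec_mulVec, ← mulVec_mulVec, hsymmdot S hSsymm, hSw]
  have hww : w ⬝ᵥ w = v ⬝ᵥ (A *ᵥ v) := by
    rw [hw, hsymmdot S⁻¹ hSinvsymm, mulVec_mulVec, ← hsymmdot _ (by rw [transpose_mul, hSinvsymm]),
      hAeq]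
  have hvAv : v ⬝ᵥ (A *ᵥ v) < v ⬝ᵥ (H *ᵥ v) := by
    have : v ⬝ᵥ (A *ᵥ v) = v ⬝ᵥ (H *ᵥ v) + η * (v ⬝ᵥ (F *ᵥ v)) := by
      rw [hA, add_mulVec, dotProduct_add, smul_mulVec, dotProduct_smul, smul_eq_mul]
    nlinarith
  -- find an eigenvalue of M greater than 1
  have hex : ∃ i : Fin n, 1 < hMherm.eigenvalues i := by
    by_contra hcon
    push_neg at hcon
    have hN : (1 - M).PosSemidef := by
      have hdiag : ((1 : Matrix (Fin n) (Fin n) ℝ)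
          - diagonal (RCLike.ofReal ∘ hMherm.eigenvalues)).PosSemidef := by
        rw [← diagonal_one, diagonal_sub]
        exact posSemidef_diagonal_iff.mpr fun i => by
          simpa using sub_nonneg.mpr (hcon i)
      have key : (1 : Matrix (Fin n) (Fin n) ℝ) - M =
          (hMherm.eigenvectorUnitary : Matrix (Fin n) (Fin n) ℝ)
            * ((1 : Matrix (Fin n) (Fin n) ℝ) - diagonal (RCLike.ofReal ∘ hMherm.eigenvalues))
            * (star (hMherm.eigenvectorUnitary : Matrix (Fin n) (Fin n) ℝ)) := by
        rw [mul_sub, sub_mul, mul_one, ← Unitary.conjStarAlgAut_apply (S := ℝ), ← hMherm.spectral_theorem]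
        congr 1
        exact ((Matrix.mem_unitaryGroup_iff).mp (hMherm.eigenvectorUnitary).2).symm
      rw [key]
      have := hdiag.mul_mul_conjTranspose_same
        (hMherm.eigenvectorUnitary : Matrix (Fin n) (Fin n) ℝ)
      rwa [star_eq_conjTranspose]
    have := hN.dotProduct_mulVec_nonneg w
    rw [star_trivial, sub_mulVec, one_mulVec, dotProduct_sub, hww, hwMw] at this
    linarith
  obtain ⟨i, hi⟩ := hex
  refine ⟨hMherm.eigenvalues i, hi, ?_⟩
  set μ := hMherm.eigenvalues i with hμ
  -- eigenvector gives det (M - μ•1) = 0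
  have hu0 : (⇑(hMherm.eigenvectorBasis i) : Fin n → ℝ) ≠ 0 := by
    intro h
    exact hMherm.eigenvectorBasis.orthonormal.ne_zero i (by ext j; exact congrFun h j)
  have hdetM : (M - μ • (1 : Matrix (Fin n) (Fin n) ℝ)).det = 0 := by
    rw [← exists_mulVec_eq_zero_iff]
    refine ⟨_, hu0, ?_⟩
    rw [sub_mulVec, smul_mulVec, one_mulVec, hMherm.mulVec_eigenvectorBasis, sub_self]
  have hfactor : M - μ • (1 : Matrix (Fin n) (Fin n) ℝ) = S * (H - μ • A) * S := by
    rw [mul_sub, sub_mul, mul_smul_comm, smul_mul_assoc, hSAS, hM]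
  have hgoal : ((1 - μ) • H - (μ * η) • F) = H - μ • A := by
    rw [hA]
    module
  rw [hgoal]
  have : S.det * (H - μ • A).det * S.det = 0 := by
    rw [← det_mul, ← det_mul, ← hfactor, hdetM]
  rcases mul_eq_zero.mp this with h | h
  · rcases mul_eq_zero.mp h with h' | h'
    · exact absurd h' hSdet.ne_zero
    · exact h'
  · exact absurd h hSdet.ne_zero
end

section
/- Let n, m ≥ 1, let H₁ be a real symmetric positive definite n×n matrix, H₂ a real symmetric positive definite m×m matrix, F₁₁ a real symmetric n×n matrix, F₂₂ a real symmetric m×m matrix, and F₁₂ a real n×m matrix, and suppose the symmetric block matrix F := [[F₁₁, F₁₂], [F₁₂ᵀ, F₂₂]] has a negative direction, i.e. there exists z ≠ 0 with zᵀFz < 0. Let η > 0. Then there exists μ ∈ (0,1) such that the block matrix J(μ) := [[((1−μ)/η)·H₁ + μ·F₁₁, √μ·F₁₂], [√μ·F₁₂ᵀ, ((1−μ)/η)·H₂ + μ·F₂₂]] is singular, i.e. det(J(μ)) = 0. (Key matrix lemma showing strict saddles are unstable fixed points of Bregman proximal alternating linearized minimization.) -/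
open Matrix

open Filter Topology


private lemma quad_abs_le {ι : Type*} [Fintype ι] (M : Matrix ι ι ℝ) (v : ι → ℝ) :
    |v ⬝ᵥ (M *ᵥ v)| ≤ (∑ i, ∑ j, |M i j|) * (v ⬝ᵥ v) := by
  have hvv : 0 ≤ v ⬝ᵥ v := Finset.sum_nonneg fun i _ => mul_self_nonneg (v i)
  have hvi : ∀ i, |v i| ≤ Real.sqrt (v ⬝ᵥ v) := by
    intro i
    rw [← Real.sqrt_sq_eq_abs]
    apply Real.sqrt_le_sqrt
    have := Finset.single_le_sum (f := fun j => v j * v j)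
      (fun j _ => mul_self_nonneg (v j)) (Finset.mem_univ i)
    simpa [dotProduct, sq] using this
  have hprod : ∀ i j, |v i * v j| ≤ v ⬝ᵥ v := by
    intro i j
    rw [abs_mul]
    calc |v i| * |v j| ≤ Real.sqrt (v ⬝ᵥ v) * Real.sqrt (v ⬝ᵥ v) :=
          mul_le_mul (hvi i) (hvi j) (abs_nonneg _) (Real.sqrt_nonneg _)
      _ = v ⬝ᵥ v := Real.mul_self_sqrt hvv
  have hq : v ⬝ᵥ (M *ᵥ v) = ∑ i, ∑ j, M i j * (v i * v j) := by
    simp only [dotProduct, mulVec, Finset.mul_sum]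
    exact Finset.sum_congr rfl fun i _ => Finset.sum_congr rfl fun j _ => by ring
  rw [hq, Finset.sum_mul]
  calc |∑ i, ∑ j, M i j * (v i * v j)| ≤ ∑ i, |∑ j, M i j * (v i * v j)| :=
        Finset.abs_sum_le_sum_abs _ _
    _ ≤ ∑ i, ∑ j, |M i j * (v i * v j)| :=
        Finset.sum_le_sum fun i _ => Finset.abs_sum_le_sum_abs _ _
    _ ≤ ∑ i, ∑ j, |M i j| * (v ⬝ᵥ v) := by
        refine Finset.sum_le_sum fun i _ => Finset.sum_le_sum fun j _ => ?_
        rw [abs_mul]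
        exact mul_le_mul_of_nonneg_left (hprod i j) (abs_nonneg _)
    _ = ∑ i, (∑ j, |M i j|) * (v ⬝ᵥ v) := by
        exact Finset.sum_congr rfl fun i _ => (Finset.sum_mul _ _ _).symm

private lemma cs_psd {ι : Type*} [Fintype ι] {A : Matrix ι ι ℝ}
    (hA : A.PosSemidef) (u v : ι → ℝ) :
    (u ⬝ᵥ (A *ᵥ v)) ^ 2 ≤ (u ⬝ᵥ (A *ᵥ u)) * (v ⬝ᵥ (A *ᵥ v)) := by
  have hq : ∀ w : ι → ℝ, 0 ≤ w ⬝ᵥ (A *ᵥ w) := fun w => by simpa using hA.dotProduct_mulVec_nonneg w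
  have hAt : Aᵀ = A := by
    rw [← conjTranspose_eq_transpose_of_trivial]; exact hA.1
  have hsym : ∀ x y : ι → ℝ, x ⬝ᵥ (A *ᵥ y) = y ⬝ᵥ (A *ᵥ x) := by
    intro x y
    rw [dotProduct_mulVec, ← mulVec_transpose, hAt, dotProduct_comm]
  have key : ∀ t : ℝ, 0 ≤ (u ⬝ᵥ (A *ᵥ u)) * (t * t) + (2 * (u ⬝ᵥ (A *ᵥ v))) * t
      + v ⬝ᵥ (A *ᵥ v) := by
    intro t
    have h := hq (t • u + v)
    have hexp : (t • u + v) ⬝ᵥ (A *ᵥ (t • u + v))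
        = (u ⬝ᵥ (A *ᵥ u)) * (t * t) + (2 * (u ⬝ᵥ (A *ᵥ v))) * t + v ⬝ᵥ (A *ᵥ v) := by
      simp only [mulVec_add, mulVec_smul, dotProduct_add, add_dotProduct, smul_dotProduct,
        dotProduct_smul, smul_eq_mul]
      rw [hsym v u]
      ring
    linarith [hexp ▸ h]
  have hd := discrim_le_zero key
  rw [discrim] at hd
  nlinarith [hd]

private lemma dp_self_pos {ι : Type*} [Fintype ι] {v : ι → ℝ} (hv : v ≠ 0) :
    0 < v ⬝ᵥ v := by
  rcases (show (0:ℝ) ≤ v ⬝ᵥ v from Finset.sum_nonneg fun i _ => mul_self_nonneg (v i)).lt_or_eq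
    with h | h
  · exact h
  · exact absurd (dotProduct_self_eq_zero.mp h.symm) hv

private lemma posDef_of_psd_det {ι : Type*} [Fintype ι] [DecidableEq ι]
    {A : Matrix ι ι ℝ} (hA : A.PosSemidef) (hdet : A.det ≠ 0) : A.PosDef := by
  refine PosDef.of_dotProduct_mulVec_pos hA.1 fun v hv => ?_
  have h0 : (0:ℝ) ≤ v ⬝ᵥ (A *ᵥ v) := by simpa using hA.dotProduct_mulVec_nonneg v
  rcases h0.lt_or_eq with h | h
  · simpa using h
  exfalso
  have hq0 : v ⬝ᵥ (A *ᵥ v) = 0 := h.symm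
  have hcs := cs_psd hA (A *ᵥ v) v
  rw [hq0, mul_zero] at hcs
  have h1 : (A *ᵥ v) ⬝ᵥ (A *ᵥ v) = 0 := by nlinarith [sq_nonneg ((A *ᵥ v) ⬝ᵥ (A *ᵥ v))]
  have hAv : A *ᵥ v = 0 := dotProduct_self_eq_zero.mp h1
  have : v = 0 := by
    have := congrArg (fun w => A⁻¹ *ᵥ w) hAv
    simpa [mulVec_mulVec, Matrix.nonsing_inv_mul A (isUnit_iff_ne_zero.mpr hdet)] using this
  exact hv this

private lemma coercive {ι : Type*} [Fintype ι] [DecidableEq ι] {A : Matrix ι ι ℝ}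
    (hA : A.PosDef) : ∃ c : ℝ, 0 < c ∧ ∀ v : ι → ℝ, c * (v ⬝ᵥ v) ≤ v ⬝ᵥ (A *ᵥ v) := by
  have hB : (A⁻¹).PosDef := hA.inv
  set S := ∑ i, ∑ j, |A⁻¹ i j| with hS
  have hS0 : 0 ≤ S := Finset.sum_nonneg fun i _ => Finset.sum_nonneg fun j _ => abs_nonneg _
  refine ⟨1/(S+1), by positivity, fun v => ?_⟩
  rcases eq_or_ne v 0 with rfl | hv
  · simp
  have hvv : 0 < v ⬝ᵥ v := dp_self_pos hv
  have hAB : A *ᵥ (A⁻¹ *ᵥ v) = v := by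
    rw [mulVec_mulVec, Matrix.mul_nonsing_inv A (isUnit_iff_ne_zero.mpr hA.det_pos.ne'),
      one_mulVec]
  have hcs := cs_psd hA.posSemidef v (A⁻¹ *ᵥ v)
  rw [hAB] at hcs
  have hq2 : (A⁻¹ *ᵥ v) ⬝ᵥ v ≤ S * (v ⬝ᵥ v) := by
    rw [dotProduct_comm]
    exact le_trans (le_abs_self _) (quad_abs_le _ _)
  have hqA : 0 ≤ v ⬝ᵥ (A *ᵥ v) := by simpa using hA.posSemidef.dotProduct_mulVec_nonneg v
  have h1 := hcs.trans (mul_le_mul_of_nonneg_left hq2 hqA)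
  have h3 : v ⬝ᵥ v ≤ (v ⬝ᵥ (A *ᵥ v)) * S :=
    le_of_mul_le_mul_right (by nlinarith [h1]) hvv
  rw [div_mul_eq_mul_div, one_mul, div_le_iff₀ (by positivity)]
  nlinarith [h3, hqA]

private lemma key_lemma {ι : Type*} [Fintype ι] [DecidableEq ι]
    (K Fd C : Matrix ι ι ℝ) (hKt : Kᵀ = K) (hFdt : Fdᵀ = Fd) (hCt : Cᵀ = C)
    (hKpd : K.PosDef) (η : ℝ) (hη : 0 < η)
    (hneg : ∃ z : ι → ℝ, z ⬝ᵥ ((Fd + C) *ᵥ z) < 0) :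
    ∃ μ : ℝ, 0 < μ ∧ μ < 1 ∧
      (((1 - μ) / η) • K + μ • Fd + Real.sqrt μ • C).det = 0 := by
  set J : ℝ → Matrix ι ι ℝ := fun μ => ((1 - μ) / η) • K + μ • Fd + Real.sqrt μ • C with hJ
  have hqJ : ∀ (μ : ℝ) (v : ι → ℝ), v ⬝ᵥ (J μ *ᵥ v)
      = ((1 - μ) / η) * (v ⬝ᵥ (K *ᵥ v)) + μ * (v ⬝ᵥ (Fd *ᵥ v))
        + Real.sqrt μ * (v ⬝ᵥ (C *ᵥ v)) := by
    intro μ v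
    simp [hJ, add_mulVec, smul_mulVec, dotProduct_add, dotProduct_smul, smul_eq_mul]
  have hcont : ∀ v : ι → ℝ, Continuous (fun μ : ℝ => v ⬝ᵥ (J μ *ᵥ v)) := by
    intro v
    simp only [hqJ]
    fun_prop
  have hJherm : ∀ μ : ℝ, (J μ).IsHermitian := by
    intro μ
    rw [IsHermitian, conjTranspose_eq_transpose_of_trivial]
    simp [hJ, transpose_add, transpose_smul, hKt, hFdt, hCt]
  -- negative direction near 1
  obtain ⟨z, hz⟩ := hneg
  have hφ1 : z ⬝ᵥ (J 1 *ᵥ z) < 0 := by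
    rw [hqJ]
    simp only [Real.sqrt_one, sub_self, zero_div, zero_mul, one_mul, zero_add]
    rw [add_mulVec, dotProduct_add] at hz
    linarith
  have hev : ∀ᶠ μ in 𝓝[<] (1:ℝ), z ⬝ᵥ (J μ *ᵥ z) < 0 ∧ 0 < μ ∧ μ < 1 := by
    have h1 : ∀ᶠ μ in 𝓝[<] (1:ℝ), z ⬝ᵥ (J μ *ᵥ z) < 0 :=
      (((hcont z).tendsto 1).mono_left nhdsWithin_le_nhds).eventually_lt_const hφ1
    have h2 : ∀ᶠ μ in 𝓝[<] (1:ℝ), μ < 1 := eventually_mem_nhdsWithin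
    have h3 : ∀ᶠ μ in 𝓝[<] (1:ℝ), 0 < μ :=
      eventually_nhdsWithin_of_eventually_nhds (eventually_gt_nhds one_pos)
    filter_upwards [h1, h2, h3] with μ a b c using ⟨a, c, b⟩
  obtain ⟨μ₁, hφμ₁, hμ₁0, hμ₁1⟩ := hev.exists
  -- the set of μ up to μ₁ where J μ is positive semidefinite
  set T : Set ℝ := {μ | μ ∈ Set.Icc 0 μ₁ ∧ ∀ v : ι → ℝ, 0 ≤ v ⬝ᵥ (J μ *ᵥ v)} with hT
  have hJ0pd : (J 0).PosDef := by
    have hJ0 : J 0 = (1/η) • K := by simp [hJ]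
    rw [hJ0]
    refine PosDef.of_dotProduct_mulVec_pos ?_ fun x hx => ?_
    · rw [IsHermitian, conjTranspose_eq_transpose_of_trivial, transpose_smul, hKt]
    · rw [smul_mulVec, dotProduct_smul, smul_eq_mul]
      exact mul_pos (by positivity) (by simpa using hKpd.dotProduct_mulVec_pos hx)
  have h0T : (0:ℝ) ∈ T := by
    refine ⟨⟨le_refl 0, hμ₁0.le⟩, fun v => ?_⟩
    rcases eq_or_ne v 0 with rfl | hv
    · simp
    · have := hJ0pd.dotProduct_mulVec_pos hv
      simp only [star_trivial] at this
      exact this.le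
  have hTbdd : BddAbove T := ⟨μ₁, fun x hx => hx.1.2⟩
  have hTclosed : IsClosed T := by
    have : T = Set.Icc 0 μ₁ ∩ ⋂ v : ι → ℝ, {μ | 0 ≤ v ⬝ᵥ (J μ *ᵥ v)} := by
      ext μ; simp [hT, Set.mem_iInter]
    rw [this]
    exact isClosed_Icc.inter (isClosed_iInter fun v => isClosed_le continuous_const (hcont v))
  set μ₀ := sSup T with hμ₀
  have hμ₀T : μ₀ ∈ T := hTclosed.csSup_mem ⟨0, h0T⟩ hTbdd
  have h0μ₀ : 0 ≤ μ₀ := hμ₀T.1.1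
  have hμ₀μ₁ : μ₀ ≤ μ₁ := hμ₀T.1.2
  have hμ₀lt : μ₀ < μ₁ := by
    rcases hμ₀μ₁.lt_or_eq with h | h
    · exact h
    · exact absurd (h ▸ hμ₀T.2 z) (not_le.mpr hφμ₁)
  have hpsd : (J μ₀).PosSemidef :=
    PosSemidef.of_dotProduct_mulVec_nonneg (hJherm μ₀) fun x => by simpa using hμ₀T.2 x
  -- the determinant at μ₀ vanishes
  have hdet0 : (J μ₀).det = 0 := by
    by_contra hdet
    have hpd : (J μ₀).PosDef := posDef_of_psd_det hpsd hdet
    obtain ⟨c, hc, hcoer⟩ := coercive hpd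
    set SK := ∑ i, ∑ j, |K i j| with hSK
    set SF := ∑ i, ∑ j, |Fd i j| with hSF
    set SC := ∑ i, ∑ j, |C i j| with hSC
    set E : ℝ → ℝ := fun μ =>
      |(1 - μ) / η - (1 - μ₀) / η| * SK + |μ - μ₀| * SF
        + |Real.sqrt μ - Real.sqrt μ₀| * SC with hE
    have hEcont : Continuous E := by fun_prop
    have hEμ₀ : E μ₀ = 0 := by simp [hE]
    have hlow : ∀ (μ : ℝ) (v : ι → ℝ), (c - E μ) * (v ⬝ᵥ v) ≤ v ⬝ᵥ (J μ *ᵥ v) := by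
      intro μ v
      have habs : ∀ a t s : ℝ, |t| ≤ s → -(|a| * s) ≤ a * t := by
        intro a t s h
        nlinarith [neg_abs_le (a*t), abs_mul a t, abs_nonneg a,
          mul_le_mul_of_nonneg_left h (abs_nonneg a)]
      have hK := habs ((1 - μ) / η - (1 - μ₀) / η) _ _ (quad_abs_le K v)
      have hF := habs (μ - μ₀) _ _ (quad_abs_le Fd v)
      have hC2 := habs (Real.sqrt μ - Real.sqrt μ₀) _ _ (quad_abs_le C v)
      have hc0 := hcoer v
      have hdiff : v ⬝ᵥ (J μ *ᵥ v) = v ⬝ᵥ (J μ₀ *ᵥ v)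
          + ((1 - μ) / η - (1 - μ₀) / η) * (v ⬝ᵥ (K *ᵥ v))
          + (μ - μ₀) * (v ⬝ᵥ (Fd *ᵥ v))
          + (Real.sqrt μ - Real.sqrt μ₀) * (v ⬝ᵥ (C *ᵥ v)) := by
        rw [hqJ, hqJ]; ring
      rw [hdiff]
      simp only [hE]
      nlinarith [hK, hF, hC2, hc0]
    have hev2 : ∀ᶠ μ in 𝓝[>] μ₀, E μ < c ∧ μ < μ₁ := by
      have h1 : ∀ᶠ μ in 𝓝[>] μ₀, E μ < c := by
        have := (hEcont.tendsto μ₀).mono_left (nhdsWithin_le_nhds (s := Set.Ioi μ₀))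
        rw [hEμ₀] at this
        exact this.eventually_lt_const hc
      have h2 : ∀ᶠ μ in 𝓝[>] μ₀, μ < μ₁ :=
        eventually_nhdsWithin_of_eventually_nhds (eventually_lt_nhds hμ₀lt)
      filter_upwards [h1, h2] with μ a b using ⟨a, b⟩
    obtain ⟨μ₂, ⟨hE2, hμ₂1⟩, hμ₂0⟩ := (hev2.and eventually_mem_nhdsWithin).exists
    have hμ₂T : μ₂ ∈ T := by
      refine ⟨⟨h0μ₀.trans (le_of_lt hμ₂0), hμ₂1.le⟩, fun v => ?_⟩
      have := hlow μ₂ v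
      have hvv : 0 ≤ v ⬝ᵥ v := Finset.sum_nonneg fun i _ => mul_self_nonneg (v i)
      nlinarith [this, hvv, hE2]
    exact absurd (le_csSup hTbdd hμ₂T) (not_le.mpr hμ₂0)
  have hμ₀pos : 0 < μ₀ := by
    rcases h0μ₀.lt_or_eq with h | h
    · exact h
    · exact absurd (h ▸ hdet0) hJ0pd.det_pos.ne'
  exact ⟨μ₀, hμ₀pos, hμ₀lt.trans hμ₁1, hdet0⟩

/-- **Key matrix lemma for B-PALM: strict saddles are unstable fixed points.**
With `H₁, H₂` symmetric positive definite, `F₁₁, F₂₂` symmetric, and the block matrix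
`F = [[F₁₁, F₁₂], [F₁₂ᵀ, F₂₂]]` having a negative direction, for any `η > 0` there is
`μ ∈ (0,1)` making the block matrix
`J(μ) = [[((1−μ)/η)H₁ + μF₁₁, √μ F₁₂], [√μ F₁₂ᵀ, ((1−μ)/η)H₂ + μF₂₂]]` singular. -/
theorem bpalm_strict_saddle_unstable
    (n m : ℕ) (hn : 1 ≤ n) (hm : 1 ≤ m)
    (H₁ : Matrix (Fin n) (Fin n) ℝ) (H₂ : Matrix (Fin m) (Fin m) ℝ)
    (F₁₁ : Matrix (Fin n) (Fin n) ℝ) (F₂₂ : Matrix (Fin m) (Fin m) ℝ)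
    (F₁₂ : Matrix (Fin n) (Fin m) ℝ)
    (hH₁symm : H₁.IsSymm) (hH₂symm : H₂.IsSymm)
    (hF₁₁symm : F₁₁.IsSymm) (hF₂₂symm : F₂₂.IsSymm)
    (hH₁pd : H₁.PosDef) (hH₂pd : H₂.PosDef)
    (hFneg : ∃ z : (Fin n ⊕ Fin m) → ℝ, z ≠ 0 ∧
      z ⬝ᵥ ((Matrix.fromBlocks F₁₁ F₁₂ F₁₂ᵀ F₂₂) *ᵥ z) < 0)
    (η : ℝ) (hη : 0 < η) :
    ∃ μ : ℝ, 0 < μ ∧ μ < 1 ∧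
      (Matrix.fromBlocks
        (((1 - μ) / η) • H₁ + μ • F₁₁) (Real.sqrt μ • F₁₂)
        (Real.sqrt μ • F₁₂ᵀ) (((1 - μ) / η) • H₂ + μ • F₂₂)).det = 0 := by
  have h1t : H₁ᵀ = H₁ := hH₁symm
  have h2t : H₂ᵀ = H₂ := hH₂symm
  have f1t : F₁₁ᵀ = F₁₁ := hF₁₁symm
  have f2t : F₂₂ᵀ = F₂₂ := hF₂₂symm
  have hKt : (fromBlocks H₁ 0 0 H₂)ᵀ = fromBlocks H₁ (0 : Matrix (Fin n) (Fin m) ℝ) 0 H₂ := by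
    rw [fromBlocks_transpose, h1t, h2t, transpose_zero, transpose_zero]
  have hFdt : (fromBlocks F₁₁ 0 0 F₂₂)ᵀ
      = fromBlocks F₁₁ (0 : Matrix (Fin n) (Fin m) ℝ) 0 F₂₂ := by
    rw [fromBlocks_transpose, f1t, f2t, transpose_zero, transpose_zero]
  have hCt : (fromBlocks 0 F₁₂ F₁₂ᵀ 0)ᵀ
      = fromBlocks (0 : Matrix (Fin n) (Fin n) ℝ) F₁₂ F₁₂ᵀ (0 : Matrix (Fin m) (Fin m) ℝ) := by
    rw [fromBlocks_transpose, transpose_transpose, transpose_zero, transpose_zero]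
  have hsplit : ∀ x : Fin n ⊕ Fin m → ℝ,
      x ⬝ᵥ ((fromBlocks H₁ 0 0 H₂) *ᵥ x)
        = (x ∘ Sum.inl) ⬝ᵥ (H₁ *ᵥ (x ∘ Sum.inl)) + (x ∘ Sum.inr) ⬝ᵥ (H₂ *ᵥ (x ∘ Sum.inr)) := by
    intro x
    rw [fromBlocks_mulVec, zero_mulVec, zero_mulVec, add_zero, zero_add]
    simp [dotProduct, Fintype.sum_sum_type, Function.comp]
  have hKpd : (fromBlocks H₁ (0 : Matrix (Fin n) (Fin m) ℝ) 0 H₂).PosDef := by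
    refine PosDef.of_dotProduct_mulVec_pos ?_ fun x hx => ?_
    · rw [IsHermitian, conjTranspose_eq_transpose_of_trivial, hKt]
    · simp only [star_trivial]
      rw [hsplit x]
      have hcase : x ∘ Sum.inl ≠ 0 ∨ x ∘ Sum.inr ≠ 0 := by
        by_contra h
        push_neg at h
        apply hx
        funext i
        cases i with
        | inl i => exact congrFun h.1 i
        | inr i => exact congrFun h.2 i
      rcases hcase with h | h
      · have ha := hH₁pd.dotProduct_mulVec_pos h
        have hb := hH₂pd.posSemidef.dotProduct_mulVec_nonneg (x ∘ Sum.inr)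
        simp only [star_trivial] at ha hb
        linarith
      · have ha := hH₁pd.posSemidef.dotProduct_mulVec_nonneg (x ∘ Sum.inl)
        have hb := hH₂pd.dotProduct_mulVec_pos h
        simp only [star_trivial] at ha hb
        linarith
  obtain ⟨z, _, hz⟩ := hFneg
  have hFsum : fromBlocks F₁₁ (0 : Matrix (Fin n) (Fin m) ℝ) 0 F₂₂ + fromBlocks 0 F₁₂ F₁₂ᵀ 0
      = fromBlocks F₁₁ F₁₂ F₁₂ᵀ F₂₂ := by
    rw [fromBlocks_add]; simp
  obtain ⟨μ, hμ0, hμ1, hdet⟩ := key_lemma (fromBlocks H₁ 0 0 H₂) (fromBlocks F₁₁ 0 0 F₂₂)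
    (fromBlocks 0 F₁₂ F₁₂ᵀ 0) hKt hFdt hCt hKpd η hη ⟨z, by rw [hFsum]; exact hz⟩
  refine ⟨μ, hμ0, hμ1, ?_⟩
  have heq : ((1 - μ) / η) • fromBlocks H₁ (0 : Matrix (Fin n) (Fin m) ℝ) 0 H₂
      + μ • fromBlocks F₁₁ 0 0 F₂₂ + Real.sqrt μ • fromBlocks 0 F₁₂ F₁₂ᵀ 0
      = fromBlocks (((1 - μ) / η) • H₁ + μ • F₁₁) (Real.sqrt μ • F₁₂)
        (Real.sqrt μ • F₁₂ᵀ) (((1 - μ) / η) • H₂ + μ • F₂₂) := by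
    rw [fromBlocks_smul, fromBlocks_smul, fromBlocks_smul, fromBlocks_add, fromBlocks_add]
    simp
  rw [← heq]
  exact hdet
end
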